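/- Let Γ = (G, l) be a metric graph with canonical model (G₀, l₀) such that |V(G₀)| ≥ 3. If Γ is 3-edge connected, then Γ is not divisorially hyperelliptic, i.e. W¹₂(Γ) = ∅: no divisor of degree 2 on Γ has rank ≥ 1. -/

import Mathlib

open scoped Classical

/-!
Combinatorial models of metric graphs: a finite (multi-)graph together with a
positive length for each edge.  A metric graph is determined by such a model;
its canonical model is the (unique) model with all valences at least `3`.
-/

structure MetricGraphModel : Type 1 where
  V : Type
  E : Type
  fV : Fintype V
  fE : Fintype E
  dV : DecidableEq V
  dE : DecidableEq E
  src : E → V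
  tgt : E → V
  len : E → ℝ
  len_pos : ∀ e, 0 < len e

attribute [instance] MetricGraphModel.fV MetricGraphModel.fE
attribute [instance] MetricGraphModel.dV MetricGraphModel.dE

namespace MetricGraphModel

/-- An edge is incident to a vertex. -/
def Incident (Γ : MetricGraphModel) (e : Γ.E) (v : Γ.V) : Prop :=
  Γ.src e = v ∨ Γ.tgt e = v

/-- Incidence multiplicity (a loop counts twice). -/
def incid (Γ : MetricGraphModel) (e : Γ.E) (v : Γ.V) : ℕ :=
  (if Γ.src e = v then 1 else 0) + (if Γ.tgt e = v then 1 else 0)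

/-- The valence of a vertex. -/
def valence (Γ : MetricGraphModel) (v : Γ.V) : ℕ := ∑ e : Γ.E, Γ.incid e v

def dSrc (Γ : MetricGraphModel) (x : Γ.E × Bool) : Γ.V :=
  if x.2 then Γ.src x.1 else Γ.tgt x.1

def dTgt (Γ : MetricGraphModel) (x : Γ.E × Bool) : Γ.V :=
  if x.2 then Γ.tgt x.1 else Γ.src x.1

/-- Walks, given as lists of oriented edges. -/
def IsWalk (Γ : MetricGraphModel) : List (Γ.E × Bool) → Γ.V → Γ.V → Prop
  | [], u, v => u = v
  | x :: xs, u, v => Γ.dSrc x = u ∧ IsWalk Γ xs (Γ.dTgt x) v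

def Connected (Γ : MetricGraphModel) : Prop :=
  Nonempty Γ.V ∧ ∀ u v : Γ.V, ∃ L, IsWalk Γ L u v

/-- Removing any set of at most `2` edges leaves the graph connected. -/
def ThreeEdgeConnected (Γ : MetricGraphModel) : Prop :=
  ∀ S : Finset Γ.E, S.card ≤ 2 → ∀ u v : Γ.V,
    ∃ L, IsWalk Γ L u v ∧ ∀ x ∈ L, x.1 ∉ S

def Loopless (Γ : MetricGraphModel) : Prop := ∀ e : Γ.E, Γ.src e ≠ Γ.tgt e

/-- A canonical model: connected, with all valences at least `3`. -/
def IsCanonical (Γ : MetricGraphModel) : Prop :=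
  Γ.Connected ∧ ∀ v : Γ.V, 3 ≤ Γ.valence v

/-- A (model of a) metric tree. -/
def IsTreeModel (Γ : MetricGraphModel) : Prop :=
  Γ.Connected ∧ Fintype.card Γ.E + 1 = Fintype.card Γ.V

/-- Points of the associated metric graph: vertices together with interior
points of edges (parametrised by their distance from the source). -/
abbrev Pt (Γ : MetricGraphModel) : Type :=
  Γ.V ⊕ Σ e : Γ.E, {t : ℝ // 0 < t ∧ t < Γ.len e}

end MetricGraphModel

open MetricGraphModel

/-- The (canonical) loopless model: insert a vertex at the midpoint of every loop. -/
noncomputable def looplessModel (Γ : MetricGraphModel) : MetricGraphModel where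
  V := Γ.V ⊕ {e : Γ.E // Γ.src e = Γ.tgt e}
  E := {e : Γ.E // Γ.src e ≠ Γ.tgt e} ⊕ ({e : Γ.E // Γ.src e = Γ.tgt e} × Bool)
  fV := inferInstance
  fE := inferInstance
  dV := inferInstance
  dE := inferInstance
  src := fun x => match x with
    | Sum.inl e => Sum.inl (Γ.src e.1)
    | Sum.inr p => Sum.inl (Γ.src p.1.1)
  tgt := fun x => match x with
    | Sum.inl e => Sum.inl (Γ.tgt e.1)
    | Sum.inr p => Sum.inr p.1
  len := fun x => match x with
    | Sum.inl e => Γ.len e.1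
    | Sum.inr p => Γ.len p.1.1 / 2
  len_pos := by
    rintro (e | p)
    · exact Γ.len_pos e.1
    · have h := Γ.len_pos p.1.1
      show 0 < Γ.len p.1.1 / 2
      linarith

/-- The metric subgraph obtained by removing all loops. -/
noncomputable def deloop (Γ : MetricGraphModel) : MetricGraphModel where
  V := Γ.V
  E := {e : Γ.E // Γ.src e ≠ Γ.tgt e}
  fV := inferInstance
  fE := inferInstance
  dV := inferInstance
  dE := inferInstance
  src := fun e => Γ.src e.1
  tgt := fun e => Γ.tgt e.1
  len := fun e => Γ.len e.1
  len_pos := fun e => Γ.len_pos e.1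

namespace MetricGraphModel

/-! ### Divisors and rational functions -/

abbrev Divisor (Γ : MetricGraphModel) : Type := Γ.Pt → ℤ

noncomputable def divDegree {Γ : MetricGraphModel} (D : Divisor Γ) : ℤ := finsum D

def DivEffective {Γ : MetricGraphModel} (D : Divisor Γ) : Prop := ∀ p, 0 ≤ D p

def DivFinSupp {Γ : MetricGraphModel} (D : Divisor Γ) : Prop :=
  (Function.support D).Finite

noncomputable def unitDiv (Γ : MetricGraphModel) (p : Γ.Pt) : Divisor Γ :=
  fun q => if q = p then 1 else 0

/-- `f` is continuous piecewise linear with integer slopes on `[0, L]`. -/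
def PLInt (f : ℝ → ℝ) (L : ℝ) : Prop :=
  ∃ n : ℕ, ∃ t : Fin (n + 1) → ℝ, t 0 = 0 ∧ t (Fin.last n) = L ∧ StrictMono t ∧
    ∀ i : Fin n, ∃ m : ℤ, ∀ s ∈ Set.Icc (t i.castSucc) (t i.succ),
      f s = f (t i.castSucc) + (m : ℝ) * (s - t i.castSucc)

/-- The (integer) outgoing slope of `f` to the right of `t0`. -/
noncomputable def slopeR (f : ℝ → ℝ) (t0 : ℝ) : ℤ :=
  if h : ∃ m : ℤ, ∃ ε : ℝ, 0 < ε ∧ ∀ s ∈ Set.Icc t0 (t0 + ε),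
      f s = f t0 + (m : ℝ) * (s - t0)
  then h.choose else 0

/-- The (integer) outgoing slope of `f` to the left of `t0`. -/
noncomputable def slopeL (f : ℝ → ℝ) (t0 : ℝ) : ℤ :=
  if h : ∃ m : ℤ, ∃ ε : ℝ, 0 < ε ∧ ∀ s ∈ Set.Icc (t0 - ε) t0,
      f s = f t0 + (m : ℝ) * (t0 - s)
  then h.choose else 0

/-- A rational function: continuous, piecewise linear with integer slopes. -/
structure RationalFunction (Γ : MetricGraphModel) where
  vVal : Γ.V → ℝ
  eFun : Γ.E → ℝ → ℝ
  pl : ∀ e, PLInt (eFun e) (Γ.len e)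
  srcVal : ∀ e, eFun e 0 = vVal (Γ.src e)
  tgtVal : ∀ e, eFun e (Γ.len e) = vVal (Γ.tgt e)

/-- The principal divisor of a rational function: the sum of the outgoing
slopes at every point. -/
noncomputable def ratDiv {Γ : MetricGraphModel} (f : RationalFunction Γ) : Divisor Γ :=
  fun p => match p with
  | Sum.inl v => ∑ e : Γ.E,
      ((if Γ.src e = v then slopeR (f.eFun e) 0 else 0) +
       (if Γ.tgt e = v then slopeL (f.eFun e) (Γ.len e) else 0))
  | Sum.inr q => slopeR (f.eFun q.1) q.2.1 + slopeL (f.eFun q.1) q.2.1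

/-- Evaluation of a rational function at a point of the metric graph. -/
def ratEval {Γ : MetricGraphModel} (f : RationalFunction Γ) : Γ.Pt → ℝ
  | Sum.inl v => f.vVal v
  | Sum.inr q => f.eFun q.1 q.2.1

/-- Linear equivalence of divisors. -/
def LinEquiv (Γ : MetricGraphModel) (D D' : Divisor Γ) : Prop :=
  ∃ f : RationalFunction Γ, ∀ p, D p = D' p + ratDiv f p

/-- The Baker–Norine rank of `D` is at least `k`. -/
def RankGE (Γ : MetricGraphModel) (D : Divisor Γ) (k : ℕ) : Prop :=
  ∀ A : Divisor Γ, DivEffective A → DivFinSupp A → divDegree A = (k : ℤ) →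
    ∃ B : Divisor Γ, DivEffective B ∧ DivFinSupp B ∧
      LinEquiv Γ (fun p => D p - A p) B

/-- `W¹₃(Γ) ≠ ∅`: some divisor of degree `3` has rank at least `1`. -/
def DivisoriallyTrigonal (Γ : MetricGraphModel) : Prop :=
  ∃ D : Divisor Γ, DivFinSupp D ∧ divDegree D = 3 ∧ RankGE Γ D 1

end MetricGraphModel

/-! ### Harmonic morphisms of metric graphs -/

/-- An indexed morphism of metric graph models.  An edge is either mapped onto
an edge (with an integer stretching index `mu`) or contracted to a vertex. -/
structure MGMorphism (Γ Δ : MetricGraphModel) where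
  vMap : Γ.V → Δ.V
  eMap : Γ.E → Δ.E ⊕ Δ.V
  mu : Γ.E → ℕ
  mu_zero : ∀ e, mu e = 0 ↔ ∃ v', eMap e = Sum.inr v'
  contract_ok : ∀ e v', eMap e = Sum.inr v' →
    vMap (Γ.src e) = v' ∧ vMap (Γ.tgt e) = v'
  edge_ok : ∀ e e', eMap e = Sum.inl e' →
    ((vMap (Γ.src e) = Δ.src e' ∧ vMap (Γ.tgt e) = Δ.tgt e') ∨
     (vMap (Γ.src e) = Δ.tgt e' ∧ vMap (Γ.tgt e) = Δ.src e'))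
  len_ok : ∀ e e', eMap e = Sum.inl e' → (mu e : ℝ) * Γ.len e = Δ.len e'

namespace MGMorphism

variable {Γ Δ : MetricGraphModel}

/-- The local sum `m_φ(v)` computed along a fixed edge `e'` at `φ(v)`. -/
noncomputable def locDeg (φ : MGMorphism Γ Δ) (v : Γ.V) (e' : Δ.E) : ℕ :=
  ∑ e : Γ.E, if φ.eMap e = Sum.inl e' then φ.mu e * Γ.incid e v else 0

def Harmonic (φ : MGMorphism Γ Δ) : Prop :=
  ∀ (v : Γ.V) (e₁ e₂ : Δ.E),
    Δ.Incident e₁ (φ.vMap v) → Δ.Incident e₂ (φ.vMap v) →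
      locDeg φ v e₁ = locDeg φ v e₂

def Nondegenerate (φ : MGMorphism Γ Δ) : Prop :=
  ∀ v : Γ.V, ∃ e' : Δ.E, Δ.Incident e' (φ.vMap v) ∧ 1 ≤ locDeg φ v e'

def HasDegree (φ : MGMorphism Γ Δ) (d : ℕ) : Prop :=
  ∀ e' : Δ.E, (∑ e : Γ.E, if φ.eMap e = Sum.inl e' then φ.mu e else 0) = d

/-- The horizontal multiplicity `m_φ(v)` at a vertex. -/
noncomputable def mVal (φ : MGMorphism Γ Δ) (v : Γ.V) : ℕ :=
  (Finset.univ.filter fun e' : Δ.E => Δ.Incident e' (φ.vMap v)).sup (locDeg φ v)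

end MGMorphism

/-! ### Isomorphisms, subdivisions and tropical modifications -/

def sameEndsMap (Γ Δ : MetricGraphModel) (f : Γ.V → Δ.V) (e : Γ.E) (e' : Δ.E) : Prop :=
  (f (Γ.src e) = Δ.src e' ∧ f (Γ.tgt e) = Δ.tgt e') ∨
  (f (Γ.src e) = Δ.tgt e' ∧ f (Γ.tgt e) = Δ.src e')

structure MGMIso (Γ Δ : MetricGraphModel) where
  vEquiv : Γ.V ≃ Δ.V
  eEquiv : Γ.E ≃ Δ.E
  ends : ∀ e, sameEndsMap Γ Δ (fun v => vEquiv v) e (eEquiv e)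
  len_eq : ∀ e, Δ.len (eEquiv e) = Γ.len e

/-- Deletion of a leaf (a valence-one vertex together with its edge). -/
def LeafDeletion (Δ Δ' : MetricGraphModel) : Prop :=
  ∃ (v₀ : Δ.V) (e₀ : Δ.E), Δ.valence v₀ = 1 ∧ Δ.Incident e₀ v₀ ∧
    ∃ (fv : Δ'.V ≃ {v : Δ.V // v ≠ v₀}) (fe : Δ'.E ≃ {e : Δ.E // e ≠ e₀}),
      (∀ e : Δ'.E, sameEndsMap Δ' Δ (fun v => (fv v).1) e (fe e).1) ∧
      ∀ e : Δ'.E, Δ.len (fe e).1 = Δ'.len e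

/-- Suppression of a valence-two vertex, merging its two edges and adding
their lengths. -/
def SeriesReduction (Δ Δ' : MetricGraphModel) : Prop :=
  ∃ (v₀ : Δ.V) (e₁ e₂ : Δ.E) (u₁ u₂ : Δ.V),
    e₁ ≠ e₂ ∧ Δ.valence v₀ = 2 ∧ u₁ ≠ v₀ ∧ u₂ ≠ v₀ ∧
    ({Δ.src e₁, Δ.tgt e₁} : Set Δ.V) = {v₀, u₁} ∧
    ({Δ.src e₂, Δ.tgt e₂} : Set Δ.V) = {v₀, u₂} ∧
    ∃ (fv : Δ'.V ≃ {v : Δ.V // v ≠ v₀}) (ebar : Δ'.E)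
      (fe : {e : Δ'.E // e ≠ ebar} ≃ {e : Δ.E // e ≠ e₁ ∧ e ≠ e₂}),
      Δ'.len ebar = Δ.len e₁ + Δ.len e₂ ∧
      ({(fv (Δ'.src ebar)).1, (fv (Δ'.tgt ebar)).1} : Set Δ.V) = {u₁, u₂} ∧
      (∀ e : {e : Δ'.E // e ≠ ebar},
        sameEndsMap Δ' Δ (fun v => (fv v).1) e.1 (fe e).1) ∧
      ∀ e : {e : Δ'.E // e ≠ ebar}, Δ.len (fe e).1 = Δ'.len e.1

def ReductionStep (Δ Δ' : MetricGraphModel) : Prop :=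
  LeafDeletion Δ Δ' ∨ SeriesReduction Δ Δ' ∨ Nonempty (MGMIso Δ Δ')

/-- `Δ` reduces to `Γ` by deleting leaves and suppressing valence-two
vertices.  When `Γ` is a canonical model, this says exactly that the metric
graph of `Δ` is a tropical modification of the metric graph of `Γ`. -/
def Reduces (Δ Γ : MetricGraphModel) : Prop :=
  Relation.ReflTransGen ReductionStep Δ Γ

def IsTropicalModificationOf (Δ Γ : MetricGraphModel) : Prop := Reduces Δ Γ

def ModelStep (Δ Δ' : MetricGraphModel) : Prop :=
  SeriesReduction Δ Δ' ∨ Nonempty (MGMIso Δ Δ')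

/-- `Δ` and `Γ` are models of the same metric graph (no trees added). -/
def SameMetricGraph (Δ Γ : MetricGraphModel) : Prop :=
  Relation.ReflTransGen ModelStep Δ Γ

/-- `Γ` is trigonal: a tropical modification of `Γ` admits a non-degenerate
harmonic morphism of degree `3` onto a metric tree. -/
def Trigonal (Γ : MetricGraphModel) : Prop :=
  ∃ Δ T : MetricGraphModel, IsTropicalModificationOf Δ Γ ∧ T.IsTreeModel ∧
    ∃ φ : MGMorphism Δ T,
      MGMorphism.Harmonic φ ∧ MGMorphism.Nondegenerate φ ∧ MGMorphism.HasDegree φ 3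

/-- `Γ` is strictly trigonal: `Γ` itself (i.e. some model of the same metric
graph) admits a non-degenerate harmonic morphism of degree `3` onto a metric
tree. -/
def StrictlyTrigonal (Γ : MetricGraphModel) : Prop :=
  ∃ Δ T : MetricGraphModel, SameMetricGraph Δ Γ ∧ T.IsTreeModel ∧
    ∃ φ : MGMorphism Δ T,
      MGMorphism.Harmonic φ ∧ MGMorphism.Nondegenerate φ ∧ MGMorphism.HasDegree φ 3

/-! ### Embeddings up to subdivision (for tropical modifications of morphisms) -/

structure SubEmbed (G Δ : MetricGraphModel) where
  v : G.V → Δ.V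
  inj : Function.Injective v
  path : G.E → List (Δ.E × Bool)
  ne : ∀ e, path e ≠ []
  walk : ∀ e, MetricGraphModel.IsWalk Δ (path e) (v (G.src e)) (v (G.tgt e))
  len_sum : ∀ e, ((path e).map fun x => Δ.len x.1).sum = G.len e

/-! ### Pullback of points along a harmonic morphism -/

/-- `φ` maps the point `p` of `Γ` to the point `t` of `Δ`. -/
def MapsToPt {Γ Δ : MetricGraphModel} (φ : MGMorphism Γ Δ) : Γ.Pt → Δ.Pt → Prop
  | Sum.inl v, Sum.inl t => φ.vMap v = t
  | Sum.inl _, Sum.inr _ => False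
  | Sum.inr q, Sum.inl t => φ.eMap q.1 = Sum.inr t
  | Sum.inr q, Sum.inr r =>
      φ.eMap q.1 = Sum.inl r.1 ∧
      ((φ.vMap (Γ.src q.1) = Δ.src r.1 ∧ (r.2.1 : ℝ) = (φ.mu q.1 : ℝ) * (q.2.1 : ℝ)) ∨
       (φ.vMap (Γ.src q.1) = Δ.tgt r.1 ∧
         (r.2.1 : ℝ) = Δ.len r.1 - (φ.mu q.1 : ℝ) * (q.2.1 : ℝ)))

/-- Horizontal multiplicity of a point. -/
noncomputable def hmult {Γ Δ : MetricGraphModel} (φ : MGMorphism Γ Δ) : Γ.Pt → ℕ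
  | Sum.inl v => MGMorphism.mVal φ v
  | Sum.inr q => φ.mu q.1

/-- The pullback divisor `φ*(t)` of a point `t`. -/
noncomputable def pullbackDiv {Γ Δ : MetricGraphModel} (φ : MGMorphism Γ Δ)
    (t : Δ.Pt) : MetricGraphModel.Divisor Γ :=
  fun p => if MapsToPt φ p t then (hmult φ p : ℤ) else 0

/-! ### Points on edges, admissible representatives, consecutive divisors -/

open MetricGraphModel

/-- `p` is an interior point of the edge `e`. -/
def interiorOf (Γ : MetricGraphModel) (e : Γ.E) (p : Γ.Pt) : Prop :=
  ∃ q : {t : ℝ // 0 < t ∧ t < Γ.len e}, p = Sum.inr ⟨e, q⟩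

def SameEdgeInterior (Γ : MetricGraphModel) (p q : Γ.Pt) : Prop :=
  ∃ e : Γ.E, interiorOf Γ e p ∧ interiorOf Γ e q

/-- `Dx` is the admissible representative of `D` with respect to the vertex
`x`: it is linearly equivalent to `D`, of the form `x + x₁ + x₂`, and `x₁, x₂`
do not both lie in the interior of one edge. -/
def AdmissibleRep (Γ : MetricGraphModel) (D : Divisor Γ) (x : Γ.V)
    (Dx : Divisor Γ) : Prop :=
  LinEquiv Γ D Dx ∧
  ∃ p q : Γ.Pt,
    Dx = (fun z => unitDiv Γ (Sum.inl x) z + unitDiv Γ p z + unitDiv Γ q z) ∧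
    ¬ SameEdgeInterior Γ p q

/-- `p` lies on the (closed) edge `e` at distance `s` from its source. -/
def LiesOn (Γ : MetricGraphModel) (e : Γ.E) (p : Γ.Pt) (s : ℝ) : Prop :=
  (p = Sum.inl (Γ.src e) ∧ s = 0) ∨ (p = Sum.inl (Γ.tgt e) ∧ s = Γ.len e) ∨
  (∃ h : 0 < s ∧ s < Γ.len e, p = Sum.inr ⟨e, ⟨s, h⟩⟩)

/-- Vertices of the refinement `G_D`: vertices of `G₀` together with all
support points of admissible representatives of `D`. -/
def SpecialPt (Γ : MetricGraphModel) (D : Divisor Γ) (p : Γ.Pt) : Prop :=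
  (∃ v : Γ.V, p = Sum.inl v) ∨
  ∃ (x : Γ.V) (Dx : Divisor Γ), AdmissibleRep Γ D x Dx ∧ Dx p ≠ 0

/-- An edge of the refinement `G_D` joining the supports of `Dx` and `Dy`:
a segment of an edge of `Γ` between a point of `Supp Dx` and a point of
`Supp Dy` containing no vertex of `G_D` in its interior. -/
def ConnSeg (Γ : MetricGraphModel) (D Dx Dy : Divisor Γ) (e : Γ.E) (s t : ℝ) : Prop :=
  s < t ∧ ∃ p q : Γ.Pt, LiesOn Γ e p s ∧ LiesOn Γ e q t ∧
    ((Dx p ≠ 0 ∧ Dy q ≠ 0) ∨ (Dy p ≠ 0 ∧ Dx q ≠ 0)) ∧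
    ∀ r, s < r → r < t → ∀ z, LiesOn Γ e z r → ¬ SpecialPt Γ D z

/-- Two admissible representatives are consecutive. -/
def Consecutive (Γ : MetricGraphModel) (D Dx Dy : Divisor Γ) : Prop :=
  Dx ≠ Dy ∧ ∃ e s t, ConnSeg Γ D Dx Dy e s t

/-- The open segment of `e` between parameters `s` and `t`, as a set of points. -/
def segSet (Γ : MetricGraphModel) (e : Γ.E) (s t : ℝ) : Set Γ.Pt :=
  {z | ∃ r, s < r ∧ r < t ∧ LiesOn Γ e z r}

/-- Two points can be joined inside one edge avoiding the removed set `R`. -/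
def AvoidAdj (Γ : MetricGraphModel) (R : Set Γ.Pt) (p q : Γ.Pt) : Prop :=
  ∃ (e : Γ.E) (s t : ℝ), s ≤ t ∧
    ((LiesOn Γ e p s ∧ LiesOn Γ e q t) ∨ (LiesOn Γ e q s ∧ LiesOn Γ e p t)) ∧
    ∀ r, s < r → r < t → ∀ z, LiesOn Γ e z r → z ∉ R

/-- The complement of `R` in the metric graph is connected. -/
def ComplementConnected (Γ : MetricGraphModel) (R : Set Γ.Pt) : Prop :=
  ∀ p q : Γ.Pt, p ∉ R → q ∉ R →
    Relation.ReflTransGen (fun a b => a ∉ R ∧ b ∉ R ∧ AvoidAdj Γ R a b) p q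

/-! ### Minimizing/maximizing sets of a rational function -/

def minSet {Γ : MetricGraphModel} (f : RationalFunction Γ) : Set Γ.Pt :=
  {p | ∀ q, ratEval f p ≤ ratEval f q}

def maxSet {Γ : MetricGraphModel} (f : RationalFunction Γ) : Set Γ.Pt :=
  {p | ∀ q, ratEval f q ≤ ratEval f p}

/-- `p` is a boundary point of `A`: it belongs to `A` and there are points of
the complement arbitrarily close to it along some edge. -/
def InBoundary (Γ : MetricGraphModel) (A : Set Γ.Pt) (p : Γ.Pt) : Prop :=
  p ∈ A ∧ ∃ (e : Γ.E) (s : ℝ), LiesOn Γ e p s ∧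
    ∀ ε : ℝ, 0 < ε → ∃ r z, |r - s| < ε ∧ LiesOn Γ e z r ∧ z ∉ A

/-- There is an edge leaving `A` at `p`, in the direction of `e` at parameter
`s` (increasing if `b = true`, decreasing if `b = false`). -/
def ExitsAt (Γ : MetricGraphModel) (A : Set Γ.Pt) (p : Γ.Pt) (e : Γ.E)
    (s : ℝ) (b : Bool) : Prop :=
  LiesOn Γ e p s ∧
  (b = true → ∃ ε : ℝ, 0 < ε ∧ s + ε ≤ Γ.len e ∧
    ∀ r, s < r → r < s + ε → ∀ z, LiesOn Γ e z r → z ∉ A) ∧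
  (b = false → ∃ ε : ℝ, 0 < ε ∧ 0 ≤ s - ε ∧
    ∀ r, s - ε < r → r < s → ∀ z, LiesOn Γ e z r → z ∉ A)

section Aux
open MetricGraphModel Set

/-- `f` is affine with integer slope `m` on `[a,b]`. -/
def AffOn (f : ℝ → ℝ) (a b : ℝ) (m : ℤ) : Prop :=
  ∀ s ∈ Set.Icc a b, f s = f a + (m : ℝ) * (s - a)

lemma AffOn.restrict {f : ℝ → ℝ} {a b m} (h : AffOn f a b m) {a' b'}
    (ha : a ≤ a') (hb : b' ≤ b) : AffOn f a' b' m := by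
  intro s hs
  have hsab : s ∈ Set.Icc a b := ⟨ha.trans hs.1, hs.2.trans hb⟩
  have ha' : a' ∈ Set.Icc a b := ⟨ha, le_trans (hs.1.trans hs.2) hb⟩
  rw [h s hsab, h a' ha']
  ring

lemma slopeR_eq {f : ℝ → ℝ} {t0 : ℝ} {m : ℤ} {ε : ℝ} (hε : 0 < ε)
    (h : ∀ s ∈ Set.Icc t0 (t0 + ε), f s = f t0 + (m : ℝ) * (s - t0)) :
    slopeR f t0 = m := by
  have hex : ∃ m : ℤ, ∃ ε : ℝ, 0 < ε ∧ ∀ s ∈ Set.Icc t0 (t0 + ε),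
      f s = f t0 + (m : ℝ) * (s - t0) := ⟨m, ε, hε, h⟩
  rw [slopeR, dif_pos hex]
  obtain ⟨ε', hε', h'⟩ := hex.choose_spec
  set m' := hex.choose
  set δ := min ε ε' with hδdef
  have hδ : 0 < δ := lt_min hε hε'
  have h1 := h (t0 + δ) ⟨by linarith, by linarith [min_le_left ε ε']⟩
  have h2 := h' (t0 + δ) ⟨by linarith, by linarith [min_le_right ε ε']⟩
  have : (m' : ℝ) * δ = (m : ℝ) * δ := by
    have := h1.symm.trans h2
    simp only [add_sub_cancel_left] at this
    linarith
  have : (m' : ℝ) = m := by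
    field_simp at this
    exact mul_right_cancel₀ (ne_of_gt hδ) (by linarith)
  exact_mod_cast this

lemma slopeL_eq {f : ℝ → ℝ} {t0 : ℝ} {m : ℤ} {ε : ℝ} (hε : 0 < ε)
    (h : ∀ s ∈ Set.Icc (t0 - ε) t0, f s = f t0 + (m : ℝ) * (t0 - s)) :
    slopeL f t0 = m := by
  have hex : ∃ m : ℤ, ∃ ε : ℝ, 0 < ε ∧ ∀ s ∈ Set.Icc (t0 - ε) t0,
      f s = f t0 + (m : ℝ) * (t0 - s) := ⟨m, ε, hε, h⟩
  rw [slopeL, dif_pos hex]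
  obtain ⟨ε', hε', h'⟩ := hex.choose_spec
  set m' := hex.choose
  set δ := min ε ε'
  have hδ : 0 < δ := lt_min hε hε'
  have h1 := h (t0 - δ) ⟨by linarith [min_le_left ε ε'], by linarith⟩
  have h2 := h' (t0 - δ) ⟨by linarith [min_le_right ε ε'], by linarith⟩
  have hmm : (m' : ℝ) * δ = (m : ℝ) * δ := by
    have := h1.symm.trans h2
    simp only [sub_sub_cancel] at this
    linarith
  have : (m' : ℝ) = m := by
    field_simp at hmm
    exact mul_right_cancel₀ (ne_of_gt hδ) (by linarith)
  exact_mod_cast this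

lemma AffOn.slopeR_left {f : ℝ → ℝ} {a b m} (h : AffOn f a b m) (hab : a < b) :
    slopeR f a = m := by
  refine slopeR_eq (sub_pos.mpr hab) ?_
  intro s hs
  exact h s (by constructor <;> [exact hs.1; linarith [hs.2]])

lemma AffOn.slopeL_right {f : ℝ → ℝ} {a b m} (h : AffOn f a b m) (hab : a < b) :
    slopeL f b = -m := by
  refine slopeL_eq (ε := b - a) (sub_pos.mpr hab) ?_
  intro s hs
  have hsab : s ∈ Set.Icc a b := ⟨by linarith [hs.1], hs.2⟩
  have hb := h b ⟨le_of_lt hab, le_refl b⟩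
  rw [h s hsab, hb]
  push_cast
  ring

lemma AffOn.slopeR_mid {f : ℝ → ℝ} {a b m} (h : AffOn f a b m) {s : ℝ}
    (hs : a ≤ s) (hsb : s < b) : slopeR f s = m :=
  (h.restrict hs (le_refl b)).slopeR_left hsb

lemma AffOn.slopeL_mid {f : ℝ → ℝ} {a b m} (h : AffOn f a b m) {s : ℝ}
    (hs : a < s) (hsb : s ≤ b) : slopeL f s = -m :=
  (h.restrict (le_refl a) hsb).slopeL_right hs

/-- From a `PLInt` witness, extract a finite set of nodes such that the function
is affine with integer slope on any subinterval of `[0,L]` avoiding the nodes. -/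
lemma exists_nodes {f : ℝ → ℝ} {L : ℝ} (hpl : PLInt f L) :
    ∃ T : Finset ℝ, (0:ℝ) ∈ T ∧ L ∈ T ∧ (∀ s ∈ T, 0 ≤ s ∧ s ≤ L) ∧
      ∀ a b : ℝ, 0 ≤ a → a < b → b ≤ L → (∀ s ∈ T, s ∉ Set.Ioo a b) →
        ∃ m : ℤ, AffOn f a b m := by
  obtain ⟨n, t, ht0, htL, hmono, hm⟩ := hpl
  refine ⟨Finset.univ.image t, ?_, ?_, ?_, ?_⟩
  · exact Finset.mem_image.mpr ⟨0, Finset.mem_univ _, ht0⟩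
  · exact Finset.mem_image.mpr ⟨Fin.last n, Finset.mem_univ _, htL⟩
  · intro s hs
    obtain ⟨i, _, rfl⟩ := Finset.mem_image.mp hs
    constructor
    · rw [← ht0]; exact hmono.monotone (Fin.zero_le i)
    · rw [← htL]; exact hmono.monotone (Fin.le_last i)
  · intro a b ha hab hbL hno
    -- largest node index with t i ≤ a
    have h0a : t 0 ≤ a := le_of_eq_of_le ht0 ha
    set S : Finset (Fin (n+1)) := Finset.univ.filter (fun j => t j ≤ a) with hS
    have hSne : S.Nonempty := ⟨0, by simp [hS, h0a]⟩
    set i := S.max' hSne with hi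
    have hiS : i ∈ S := S.max'_mem hSne
    have hia : t i ≤ a := (Finset.mem_filter.mp hiS).2
    have hlast : i < Fin.last n := by
      rcases lt_or_eq_of_le (Fin.le_last i) with h | h
      · exact h
      · exfalso; rw [h] at hia; rw [htL] at hia; linarith
    have hn : (i : ℕ) < n := by
      have := hlast
      simpa [Fin.lt_iff_val_lt_val] using this
    set i' : Fin n := ⟨i, hn⟩ with hi'
    have hcast : i'.castSucc = i := by
      apply Fin.ext; simp [hi']
    have hsucc_gt : a < t i'.succ := by
      by_contra hle
      push_neg at hle
      have : i'.succ ∈ S := by simp [hS, hle]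
      have := S.le_max' _ this
      rw [← hi] at this
      have hlt : i'.castSucc < i'.succ := Fin.castSucc_lt_succ
      rw [hcast] at hlt
      exact absurd this (not_le.mpr hlt)
    have hsucc_ge : b ≤ t i'.succ := by
      by_contra hlt
      push_neg at hlt
      have : t i'.succ ∈ Finset.univ.image t := Finset.mem_image.mpr ⟨_, Finset.mem_univ _, rfl⟩
      exact hno _ this ⟨hsucc_gt, hlt⟩
    obtain ⟨m, hmm⟩ := hm i'
    rw [hcast] at hmm
    refine ⟨m, ?_⟩
    have hai : ∀ s, a ≤ s → s ≤ b → f s = f (t i) + m * (s - t i) := by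
      intro s h1 h2
      exact hmm s ⟨hia.trans h1, h2.trans hsucc_ge⟩
    intro s hs
    have h1 := hai s hs.1 hs.2
    have h2 := hai a (le_refl a) (le_of_lt hab)
    rw [h1, h2]; ring

end Aux
section Nodes
open MetricGraphModel Set

/-- Common node data for a pair of PL functions on `[0,L]`. -/
structure NodeData (fF fG : ℝ → ℝ) (L : ℝ) : Type where
  T : Finset ℝ
  mem0 : (0:ℝ) ∈ T
  memL : L ∈ T
  bdd : ∀ s ∈ T, 0 ≤ s ∧ s ≤ L
  aff : ∀ a b : ℝ, 0 ≤ a → a < b → b ≤ L → (∀ s ∈ T, s ∉ Set.Ioo a b) →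
        (∃ m : ℤ, AffOn fF a b m) ∧ (∃ m : ℤ, AffOn fG a b m)

noncomputable def mkNodeData {fF fG : ℝ → ℝ} {L : ℝ} (hF : PLInt fF L) (hG : PLInt fG L) :
    NodeData fF fG L := by
  choose TF h1 h2 h3 h4 using exists_nodes hF
  choose TG g1 g2 g3 g4 using exists_nodes hG
  exact
  { T := TF ∪ TG
    mem0 := Finset.mem_union_left _ h1
    memL := Finset.mem_union_left _ h2
    bdd := fun s hs => by
      rcases Finset.mem_union.mp hs with h | h
      exacts [h3 s h, g3 s h]
    aff := fun a b ha hab hb hno =>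
      ⟨h4 a b ha hab hb (fun s hs => hno s (Finset.mem_union_left _ hs)),
       g4 a b ha hab hb (fun s hs => hno s (Finset.mem_union_right _ hs))⟩ }

namespace NodeData

variable {fF fG : ℝ → ℝ} {L : ℝ}

lemma next (nd : NodeData fF fG L) {a : ℝ} (h0 : 0 ≤ a) (hL : a < L) :
    ∃ b ∈ nd.T, a < b ∧ b ≤ L ∧ ∀ s ∈ nd.T, s ∉ Set.Ioo a b := by
  have hne : (nd.T.filter (fun s => a < s)).Nonempty :=
    ⟨L, Finset.mem_filter.mpr ⟨nd.memL, hL⟩⟩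
  set b := (nd.T.filter (fun s => a < s)).min' hne with hb
  have hbmem := (nd.T.filter (fun s => a < s)).min'_mem hne
  have hbT := (Finset.mem_filter.mp hbmem).1
  have hab : a < b := (Finset.mem_filter.mp hbmem).2
  refine ⟨b, hbT, hab, (nd.bdd b hbT).2, ?_⟩
  intro s hs hmem
  have hmemf : s ∈ nd.T.filter (fun u => a < u) := Finset.mem_filter.mpr ⟨hs, hmem.1⟩
  have : b ≤ s := Finset.min'_le _ _ hmemf
  exact absurd hmem.2 (not_lt.mpr this)

lemma prev (nd : NodeData fF fG L) {a : ℝ} (h0 : 0 < a) (hL : a ≤ L) :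
    ∃ b ∈ nd.T, b < a ∧ 0 ≤ b ∧ ∀ s ∈ nd.T, s ∉ Set.Ioo b a := by
  have hne : (nd.T.filter (fun s => s < a)).Nonempty :=
    ⟨0, Finset.mem_filter.mpr ⟨nd.mem0, h0⟩⟩
  set b := (nd.T.filter (fun s => s < a)).max' hne with hb
  have hbmem := (nd.T.filter (fun s => s < a)).max'_mem hne
  have hbT := (Finset.mem_filter.mp hbmem).1
  have hab : b < a := (Finset.mem_filter.mp hbmem).2
  refine ⟨b, hbT, hab, (nd.bdd b hbT).1, ?_⟩
  intro s hs hmem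
  have hmemf : s ∈ nd.T.filter (fun u => u < a) := Finset.mem_filter.mpr ⟨hs, hmem.2⟩
  have : s ≤ b := Finset.le_max' _ _ hmemf
  exact absurd hmem.1 (not_lt.mpr this)

lemma right (nd : NodeData fF fG L) {a : ℝ} (h0 : 0 ≤ a) (hL : a < L) :
    ∃ b mF mG, b ∈ nd.T ∧ a < b ∧ b ≤ L ∧ AffOn fF a b mF ∧ AffOn fG a b mG ∧
      slopeR fF a = mF ∧ slopeR fG a = mG ∧
      (∀ s ∈ Set.Icc a b, fG s - fF s = (fG a - fF a) + ((mG : ℝ) - mF) * (s - a)) := by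
  obtain ⟨b, hbT, hab, hbL, hno⟩ := nd.next h0 hL
  obtain ⟨⟨mF, hmF⟩, ⟨mG, hmG⟩⟩ := nd.aff a b h0 hab hbL hno
  refine ⟨b, mF, mG, hbT, hab, hbL, hmF, hmG, hmF.slopeR_left hab, hmG.slopeR_left hab, ?_⟩
  intro s hs
  rw [hmF s hs, hmG s hs]; ring

lemma left (nd : NodeData fF fG L) {a : ℝ} (h0 : 0 < a) (hL : a ≤ L) :
    ∃ b mF mG, b ∈ nd.T ∧ b < a ∧ 0 ≤ b ∧ AffOn fF b a mF ∧ AffOn fG b a mG ∧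
      slopeL fF a = -mF ∧ slopeL fG a = -mG ∧
      (∀ s ∈ Set.Icc b a, fG s - fF s = (fG a - fF a) + ((mG : ℝ) - mF) * (s - a)) := by
  obtain ⟨b, hbT, hab, hb0, hno⟩ := nd.prev h0 hL
  obtain ⟨⟨mF, hmF⟩, ⟨mG, hmG⟩⟩ := nd.aff b a hb0 hab hL hno
  refine ⟨b, mF, mG, hbT, hab, hb0, hmF, hmG, hmF.slopeL_right hab, hmG.slopeL_right hab, ?_⟩
  intro s hs
  have haa : a ∈ Set.Icc b a := ⟨le_of_lt hab, le_refl a⟩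
  rw [hmF s hs, hmG s hs, hmF a haa, hmG a haa]; ring

lemma interior_slopes (nd : NodeData fF fG L) {s : ℝ} (h0 : 0 < s) (hL : s < L) (hsT : s ∉ nd.T) :
    ∃ mF mG : ℤ, slopeR fF s = mF ∧ slopeL fF s = -mF ∧ slopeR fG s = mG ∧ slopeL fG s = -mG := by
  obtain ⟨a, haT, has, ha0, hnoa⟩ := nd.prev h0 (le_of_lt hL)
  obtain ⟨b, hbT, hsb, hbL, hnob⟩ := nd.next (le_of_lt h0) hL
  have hno : ∀ u ∈ nd.T, u ∉ Set.Ioo a b := by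
    intro u hu hmem
    rcases lt_trichotomy u s with h | h | h
    · exact hnoa u hu ⟨hmem.1, h⟩
    · exact hsT (h ▸ hu)
    · exact hnob u hu ⟨h, hmem.2⟩
  obtain ⟨⟨mF, hmF⟩, ⟨mG, hmG⟩⟩ := nd.aff a b ha0 (has.trans hsb) hbL hno
  exact ⟨mF, mG, hmF.slopeR_mid (le_of_lt has) hsb, hmF.slopeL_mid has (le_of_lt hsb),
    hmG.slopeR_mid (le_of_lt has) hsb, hmG.slopeL_mid has (le_of_lt hsb)⟩

lemma min_bound (nd : NodeData fF fG L) {c : ℝ} (hminT : ∀ s ∈ nd.T, c ≤ fG s - fF s) :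
    ∀ s, 0 ≤ s → s ≤ L → c ≤ fG s - fF s := by
  intro s hs0 hsL
  by_cases hsT : s ∈ nd.T
  · exact hminT s hsT
  have h0 : 0 < s := lt_of_le_of_ne hs0 (fun h => hsT (h ▸ nd.mem0))
  have hL : s < L := lt_of_le_of_ne hsL (fun h => hsT (h ▸ nd.memL))
  obtain ⟨a, haT, has, ha0, hnoa⟩ := nd.prev h0 (le_of_lt hL)
  obtain ⟨b, hbT, hsb, hbL, hnob⟩ := nd.next (le_of_lt h0) hL
  have hno : ∀ u ∈ nd.T, u ∉ Set.Ioo a b := by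
    intro u hu hmem
    rcases lt_trichotomy u s with h | h | h
    · exact hnoa u hu ⟨hmem.1, h⟩
    · exact hsT (h ▸ hu)
    · exact hnob u hu ⟨h, hmem.2⟩
  obtain ⟨⟨mF, hmF⟩, ⟨mG, hmG⟩⟩ := nd.aff a b ha0 (has.trans hsb) hbL hno
  have hga := hminT a haT
  have hgb := hminT b hbT
  have hs : s ∈ Set.Icc a b := ⟨le_of_lt has, le_of_lt hsb⟩
  have hb : b ∈ Set.Icc a b := ⟨le_of_lt (has.trans hsb), le_refl b⟩
  have e1 : fG s - fF s = (fG a - fF a) + ((mG : ℝ) - mF) * (s - a) := by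
    rw [hmF s hs, hmG s hs]; ring
  have e2 : fG b - fF b = (fG a - fF a) + ((mG : ℝ) - mF) * (b - a) := by
    rw [hmF b hb, hmG b hb]; ring
  rcases le_or_gt 0 ((mG : ℝ) - mF) with hmu | hmu
  · nlinarith
  · nlinarith

lemma slopeDiff_nonneg_right (nd : NodeData fF fG L) {c : ℝ} (hmin : ∀ s, 0 ≤ s → s ≤ L → c ≤ fG s - fF s)
    {a : ℝ} (h0 : 0 ≤ a) (hL : a < L) (hca : fG a - fF a = c) :
    0 ≤ slopeR fG a - slopeR fF a := by
  obtain ⟨b, mF, mG, hbT, hab, hbL, _, _, hsF, hsG, hrel⟩ := nd.right h0 hL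
  rw [hsF, hsG]
  have hgb := hmin b (le_trans h0 (le_of_lt hab)) hbL
  have := hrel b ⟨le_of_lt hab, le_refl b⟩
  have hmu : (0:ℝ) ≤ ((mG : ℝ) - mF) := by nlinarith
  have : (mF : ℝ) ≤ mG := by linarith
  exact_mod_cast sub_nonneg.mpr (by exact_mod_cast this)

lemma slopeDiff_nonneg_left (nd : NodeData fF fG L) {c : ℝ} (hmin : ∀ s, 0 ≤ s → s ≤ L → c ≤ fG s - fF s)
    {a : ℝ} (h0 : 0 < a) (hL : a ≤ L) (hca : fG a - fF a = c) :
    0 ≤ slopeL fG a - slopeL fF a := by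
  obtain ⟨b, mF, mG, hbT, hab, hb0, _, _, hsF, hsG, hrel⟩ := nd.left h0 hL
  rw [hsF, hsG]
  have hgb := hmin b hb0 (le_trans (le_of_lt hab) hL)
  have := hrel b ⟨le_refl b, le_of_lt hab⟩
  have hmu : ((mG : ℝ) - mF) ≤ 0 := by nlinarith
  have : (mG : ℝ) ≤ mF := by linarith
  have hle : mG ≤ mF := by exact_mod_cast this
  omega

lemma exit_right (nd : NodeData fF fG L) {c : ℝ} (hmin : ∀ s, 0 ≤ s → s ≤ L → c ≤ fG s - fF s)
    (hc0 : fG 0 - fF 0 = c) (hcL : fG L - fF L ≠ c) :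
    ∃ a, 0 ≤ a ∧ a < L ∧ fG a - fF a = c ∧ 1 ≤ slopeR fG a - slopeR fF a := by
  classical
  set A := nd.T.filter (fun s' => ∀ u, 0 ≤ u → u ≤ s' → fG u - fF u = c) with hA
  have h0A : (0:ℝ) ∈ A := by
    refine Finset.mem_filter.mpr ⟨nd.mem0, fun u hu hu' => ?_⟩
    rwa [le_antisymm hu' hu]
  set a := A.max' ⟨0, h0A⟩ with ha
  have haA := A.max'_mem ⟨0, h0A⟩
  have haT := (Finset.mem_filter.mp haA).1
  have haP := (Finset.mem_filter.mp haA).2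
  have ha0 : 0 ≤ a := (nd.bdd a haT).1
  have hgc : fG a - fF a = c := haP a ha0 (le_refl a)
  have haL : a < L := by
    rcases lt_or_eq_of_le (nd.bdd a haT).2 with h | h
    · exact h
    · exact absurd (h ▸ hgc) hcL
  obtain ⟨b, mF, mG, hbT, hab, hbL, _, _, hsF, hsG, hrel⟩ := nd.right ha0 haL
  have hgb := hmin b (le_trans ha0 (le_of_lt hab)) hbL
  have hb := hrel b ⟨le_of_lt hab, le_refl b⟩
  have hmu : (0:ℝ) ≤ ((mG : ℝ) - mF) := by nlinarith
  have hle : mF ≤ mG := by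
    have : (mF : ℝ) ≤ mG := by linarith
    exact_mod_cast this
  have hne : mF ≠ mG := by
    intro heq
    have hbA : b ∈ A := by
      refine Finset.mem_filter.mpr ⟨hbT, fun u hu hu' => ?_⟩
      rcases le_or_gt u a with h | h
      · exact haP u hu h
      · have := hrel u ⟨le_of_lt h, hu'⟩
        rw [heq] at this
        simpa [hgc] using this
    have := A.le_max' b hbA
    rw [← ha] at this
    exact absurd hab (not_lt.mpr this)
  refine ⟨a, ha0, haL, hgc, ?_⟩
  rw [hsF, hsG]
  omega

lemma exit_left (nd : NodeData fF fG L) {c : ℝ} (hmin : ∀ s, 0 ≤ s → s ≤ L → c ≤ fG s - fF s)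
    (hcL : fG L - fF L = c) (hc0 : fG 0 - fF 0 ≠ c) (hL0 : 0 < L) :
    ∃ a, 0 < a ∧ a ≤ L ∧ fG a - fF a = c ∧ 1 ≤ slopeL fG a - slopeL fF a := by
  classical
  set A := nd.T.filter (fun s' => ∀ u, s' ≤ u → u ≤ L → fG u - fF u = c) with hA
  have hLA : L ∈ A := by
    refine Finset.mem_filter.mpr ⟨nd.memL, fun u hu hu' => ?_⟩
    rwa [le_antisymm hu' hu]
  set a := A.min' ⟨L, hLA⟩ with ha
  have haA := A.min'_mem ⟨L, hLA⟩
  have haT := (Finset.mem_filter.mp haA).1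
  have haP := (Finset.mem_filter.mp haA).2
  have haL : a ≤ L := (nd.bdd a haT).2
  have hgc : fG a - fF a = c := haP a (le_refl a) haL
  have ha0 : 0 < a := by
    rcases lt_or_eq_of_le (nd.bdd a haT).1 with h | h
    · exact h
    · exact absurd (h ▸ hgc) hc0
  obtain ⟨b, mF, mG, hbT, hab, hb0, _, _, hsF, hsG, hrel⟩ := nd.left ha0 haL
  have hgb := hmin b hb0 (le_trans (le_of_lt hab) haL)
  have hb := hrel b ⟨le_refl b, le_of_lt hab⟩
  have hmu : ((mG : ℝ) - mF) ≤ 0 := by nlinarith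
  have hle : mG ≤ mF := by
    have : (mG : ℝ) ≤ mF := by linarith
    exact_mod_cast this
  have hne : mG ≠ mF := by
    intro heq
    have hbA : b ∈ A := by
      refine Finset.mem_filter.mpr ⟨hbT, fun u hu hu' => ?_⟩
      rcases le_or_gt a u with h | h
      · exact haP u h hu'
      · have := hrel u ⟨hu, le_of_lt h⟩
        rw [heq] at this
        simpa [hgc] using this
    have := A.min'_le b hbA
    rw [← ha] at this
    exact absurd hab (not_lt.mpr this)
  refine ⟨a, ha0, haL, hgc, ?_⟩
  rw [hsF, hsG]
  omega

lemma min_node_of_mem (nd : NodeData fF fG L) {c : ℝ} (hmin : ∀ s, 0 ≤ s → s ≤ L → c ≤ fG s - fF s)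
    {s₀ : ℝ} (h0 : 0 ≤ s₀) (hL : s₀ ≤ L) (hc : fG s₀ - fF s₀ = c) :
    ∃ t ∈ nd.T, fG t - fF t = c := by
  by_cases hsT : s₀ ∈ nd.T
  · exact ⟨s₀, hsT, hc⟩
  have h0' : 0 < s₀ := lt_of_le_of_ne h0 (fun h => hsT (h ▸ nd.mem0))
  have hL' : s₀ < L := lt_of_le_of_ne hL (fun h => hsT (h ▸ nd.memL))
  obtain ⟨a, haT, has, ha0, hnoa⟩ := nd.prev h0' (le_of_lt hL')
  obtain ⟨b, hbT, hsb, hbL, hnob⟩ := nd.next (le_of_lt h0') hL'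
  have hno : ∀ u ∈ nd.T, u ∉ Set.Ioo a b := by
    intro u hu hmem
    rcases lt_trichotomy u s₀ with h | h | h
    · exact hnoa u hu ⟨hmem.1, h⟩
    · exact hsT (h ▸ hu)
    · exact hnob u hu ⟨h, hmem.2⟩
  obtain ⟨⟨mF, hmF⟩, ⟨mG, hmG⟩⟩ := nd.aff a b ha0 (has.trans hsb) hbL hno
  have hga := hmin a ha0 (le_trans (le_of_lt (has.trans hsb)) hbL)
  have hgb := hmin b (le_trans ha0 (le_of_lt (has.trans hsb))) hbL
  have hs : s₀ ∈ Set.Icc a b := ⟨le_of_lt has, le_of_lt hsb⟩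
  have hbm : b ∈ Set.Icc a b := ⟨le_of_lt (has.trans hsb), le_refl b⟩
  have e1 : fG s₀ - fF s₀ = (fG a - fF a) + ((mG : ℝ) - mF) * (s₀ - a) := by
    rw [hmF s₀ hs, hmG s₀ hs]; ring
  have e2 : fG b - fF b = (fG a - fF a) + ((mG : ℝ) - mF) * (b - a) := by
    rw [hmF b hbm, hmG b hbm]; ring
  rcases lt_trichotomy ((mG : ℝ) - mF) 0 with hmu | hmu | hmu
  · exfalso; nlinarith
  · exact ⟨a, haT, by nlinarith⟩
  · exfalso; nlinarith

lemma exit_interior (nd : NodeData fF fG L) {c : ℝ} (hmin : ∀ s, 0 ≤ s → s ≤ L → c ≤ fG s - fF s)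
    (hc0 : fG 0 - fF 0 ≠ c) (hcL : fG L - fF L ≠ c)
    {s₀ : ℝ} (h0 : 0 ≤ s₀) (hL : s₀ ≤ L) (hc : fG s₀ - fF s₀ = c) :
    ∃ a b, 0 < a ∧ a ≤ b ∧ b < L ∧ fG a - fF a = c ∧ fG b - fF b = c ∧
      1 ≤ slopeL fG a - slopeL fF a ∧ 1 ≤ slopeR fG b - slopeR fF b := by
  classical
  obtain ⟨t, htT, htc⟩ := nd.min_node_of_mem hmin h0 hL hc
  have ht0 : 0 < t := by
    rcases lt_or_eq_of_le (nd.bdd t htT).1 with h | h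
    · exact h
    · exact absurd (h ▸ htc) hc0
  have htL : t < L := by
    rcases lt_or_eq_of_le (nd.bdd t htT).2 with h | h
    · exact h
    · exact absurd (h ▸ htc) hcL
  -- left endpoint of the component of t
  set A := nd.T.filter (fun s' => s' ≤ t ∧ ∀ u, s' ≤ u → u ≤ t → fG u - fF u = c) with hA
  have htA : t ∈ A := by
    refine Finset.mem_filter.mpr ⟨htT, le_refl t, fun u hu hu' => ?_⟩
    rwa [le_antisymm hu' hu]
  set a := A.min' ⟨t, htA⟩ with ha
  have haA := A.min'_mem ⟨t, htA⟩
  have haT := (Finset.mem_filter.mp haA).1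
  have hat : a ≤ t := (Finset.mem_filter.mp haA).2.1
  have haP := (Finset.mem_filter.mp haA).2.2
  have hgc : fG a - fF a = c := haP a (le_refl a) hat
  have ha0 : 0 < a := by
    rcases lt_or_eq_of_le (nd.bdd a haT).1 with h | h
    · exact h
    · exact absurd (h ▸ hgc) hc0
  have haL : a ≤ L := (nd.bdd a haT).2
  obtain ⟨b', mF, mG, hbT, hab, hb0, _, _, hsF, hsG, hrel⟩ := nd.left ha0 haL
  have hgb := hmin b' hb0 (le_trans (le_of_lt hab) haL)
  have hb := hrel b' ⟨le_refl b', le_of_lt hab⟩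
  have hmu : ((mG : ℝ) - mF) ≤ 0 := by nlinarith
  have hle : mG ≤ mF := by
    have : (mG : ℝ) ≤ mF := by linarith
    exact_mod_cast this
  have hneL : mG ≠ mF := by
    intro heq
    have hbA : b' ∈ A := by
      refine Finset.mem_filter.mpr ⟨hbT, le_trans (le_of_lt hab) hat, fun u hu hu' => ?_⟩
      rcases le_or_gt a u with h | h
      · exact haP u h (by linarith)
      · rcases le_or_gt u t with _ | _
        · have := hrel u ⟨hu, le_of_lt h⟩
          rw [heq] at this
          simpa [hgc] using this
        · linarith
    have := A.min'_le b' hbA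
    rw [← ha] at this
    exact absurd hab (not_lt.mpr this)
  -- right endpoint of the component of t
  set B := nd.T.filter (fun s' => t ≤ s' ∧ ∀ u, t ≤ u → u ≤ s' → fG u - fF u = c) with hB
  have htB : t ∈ B := by
    refine Finset.mem_filter.mpr ⟨htT, le_refl t, fun u hu hu' => ?_⟩
    rwa [le_antisymm hu' hu]
  set b := B.max' ⟨t, htB⟩ with hbdef
  have hbB := B.max'_mem ⟨t, htB⟩
  have hbTm := (Finset.mem_filter.mp hbB).1
  have htb : t ≤ b := (Finset.mem_filter.mp hbB).2.1
  have hbP := (Finset.mem_filter.mp hbB).2.2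
  have hgcb : fG b - fF b = c := hbP b htb (le_refl b)
  have hbL : b < L := by
    rcases lt_or_eq_of_le (nd.bdd b hbTm).2 with h | h
    · exact h
    · exact absurd (h ▸ hgcb) hcL
  have hb0' : 0 ≤ b := (nd.bdd b hbTm).1
  obtain ⟨b2, mF2, mG2, hb2T, hbb2, hb2L, _, _, hsF2, hsG2, hrel2⟩ := nd.right hb0' hbL
  have hgb2 := hmin b2 (le_trans hb0' (le_of_lt hbb2)) hb2L
  have hbv := hrel2 b2 ⟨le_of_lt hbb2, le_refl b2⟩
  have hmu2 : (0:ℝ) ≤ ((mG2 : ℝ) - mF2) := by nlinarith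
  have hle2 : mF2 ≤ mG2 := by
    have : (mF2 : ℝ) ≤ mG2 := by linarith
    exact_mod_cast this
  have hneR : mF2 ≠ mG2 := by
    intro heq
    have hbA : b2 ∈ B := by
      refine Finset.mem_filter.mpr ⟨hb2T, le_trans htb (le_of_lt hbb2), fun u hu hu' => ?_⟩
      rcases le_or_gt u b with h | h
      · exact hbP u hu h
      · have := hrel2 u ⟨le_of_lt h, hu'⟩
        rw [heq] at this
        simpa [hgcb] using this
    have := B.le_max' b2 hbA
    rw [← hbdef] at this
    exact absurd hbb2 (not_lt.mpr this)
  refine ⟨a, b, ha0, le_trans hat htb, hbL, hgc, hgcb, ?_, ?_⟩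
  · rw [hsF, hsG]; omega
  · rw [hsF2, hsG2]; omega

lemma const_slopes (nd : NodeData fF fG L) {c : ℝ} (hall : ∀ s, 0 ≤ s → s ≤ L → fG s - fF s = c) :
    (∀ a, 0 ≤ a → a < L → slopeR fG a - slopeR fF a = 0) ∧
    (∀ a, 0 < a → a ≤ L → slopeL fG a - slopeL fF a = 0) := by
  constructor
  · intro a h0 hL
    obtain ⟨b, mF, mG, hbT, hab, hbL, _, _, hsF, hsG, hrel⟩ := nd.right h0 hL
    have h1 := hrel b ⟨le_of_lt hab, le_refl b⟩
    rw [hall b (le_trans h0 (le_of_lt hab)) hbL, hall a h0 (le_trans (le_of_lt hab) hbL)] at h1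
    have : ((mG : ℝ) - mF) = 0 := by
      rcases mul_eq_zero.mp (by linarith : ((mG : ℝ) - mF) * (b - a) = 0) with h | h
      · exact h
      · exact absurd h (by intro hh; linarith)
    have : mG = mF := by
      have : (mG : ℝ) = mF := by linarith
      exact_mod_cast this
    rw [hsF, hsG, this]; ring
  · intro a h0 hL
    obtain ⟨b, mF, mG, hbT, hab, hb0, _, _, hsF, hsG, hrel⟩ := nd.left h0 hL
    have h1 := hrel b ⟨le_refl b, le_of_lt hab⟩
    rw [hall b hb0 (le_trans (le_of_lt hab) hL), hall a (le_trans hb0 (le_of_lt hab)) hL] at h1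
    have : ((mG : ℝ) - mF) = 0 := by
      rcases mul_eq_zero.mp (by linarith : ((mG : ℝ) - mF) * (b - a) = 0) with h | h
      · exact h
      · exact absurd h (by intro hh; linarith)
    have : mG = mF := by
      have : (mG : ℝ) = mF := by linarith
      exact_mod_cast this
    rw [hsF, hsG, this]; ring

end NodeData
end Nodes
section Degree
open MetricGraphModel Set

namespace NodeData

variable {fF fG : ℝ → ℝ} {L : ℝ}

noncomputable def nextN (nd : NodeData fF fG L) (a : ℝ) : ℝ :=
  if h : (nd.T.filter (fun u => a < u)).Nonempty then (nd.T.filter (fun u => a < u)).min' h else 0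

noncomputable def prevN (nd : NodeData fF fG L) (b : ℝ) : ℝ :=
  if h : (nd.T.filter (fun u => u < b)).Nonempty then (nd.T.filter (fun u => u < b)).max' h else 0

lemma nextN_spec (nd : NodeData fF fG L) {a : ℝ} (haT : a ∈ nd.T) (hL : a < L) :
    nd.nextN a ∈ nd.T ∧ a < nd.nextN a ∧ nd.nextN a ≤ L ∧
      ∀ s ∈ nd.T, s ∉ Set.Ioo a (nd.nextN a) := by
  have hne : (nd.T.filter (fun u => a < u)).Nonempty :=
    ⟨L, Finset.mem_filter.mpr ⟨nd.memL, hL⟩⟩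
  rw [nextN, dif_pos hne]
  have hmem := (nd.T.filter (fun u => a < u)).min'_mem hne
  have hT := (Finset.mem_filter.mp hmem).1
  refine ⟨hT, (Finset.mem_filter.mp hmem).2, (nd.bdd _ hT).2, ?_⟩
  intro s hs hmm
  have hf : s ∈ nd.T.filter (fun u => a < u) := Finset.mem_filter.mpr ⟨hs, hmm.1⟩
  exact absurd hmm.2 (not_lt.mpr (Finset.min'_le _ _ hf))

lemma prevN_spec (nd : NodeData fF fG L) {b : ℝ} (hbT : b ∈ nd.T) (h0 : 0 < b) :
    nd.prevN b ∈ nd.T ∧ nd.prevN b < b ∧ 0 ≤ nd.prevN b ∧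
      ∀ s ∈ nd.T, s ∉ Set.Ioo (nd.prevN b) b := by
  have hne : (nd.T.filter (fun u => u < b)).Nonempty :=
    ⟨0, Finset.mem_filter.mpr ⟨nd.mem0, h0⟩⟩
  rw [prevN, dif_pos hne]
  have hmem := (nd.T.filter (fun u => u < b)).max'_mem hne
  have hT := (Finset.mem_filter.mp hmem).1
  refine ⟨hT, (Finset.mem_filter.mp hmem).2, (nd.bdd _ hT).1, ?_⟩
  intro s hs hmm
  have hf : s ∈ nd.T.filter (fun u => u < b) := Finset.mem_filter.mpr ⟨hs, hmm.2⟩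
  exact absurd hmm.1 (not_lt.mpr (Finset.le_max' _ _ hf))

lemma prevN_nextN (nd : NodeData fF fG L) {a : ℝ} (haT : a ∈ nd.T) (hL : a < L) :
    nd.prevN (nd.nextN a) = a := by
  obtain ⟨hT, hlt, hle, hno⟩ := nd.nextN_spec haT hL
  have hne : (nd.T.filter (fun u => u < nd.nextN a)).Nonempty :=
    ⟨a, Finset.mem_filter.mpr ⟨haT, hlt⟩⟩
  rw [prevN, dif_pos hne]
  apply le_antisymm
  · apply Finset.max'_le
    intro u hu
    have huT := (Finset.mem_filter.mp hu).1
    have hub := (Finset.mem_filter.mp hu).2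
    by_contra hua
    push_neg at hua
    exact hno u huT ⟨hua, hub⟩
  · have hane : a ∈ nd.T.filter (fun u => u < nd.nextN a) := Finset.mem_filter.mpr ⟨haT, hlt⟩
    exact Finset.le_max' _ _ hane

lemma nextN_prevN (nd : NodeData fF fG L) {b : ℝ} (hbT : b ∈ nd.T) (h0 : 0 < b) :
    nd.nextN (nd.prevN b) = b := by
  obtain ⟨hT, hlt, hle, hno⟩ := nd.prevN_spec hbT h0
  have hne : (nd.T.filter (fun u => nd.prevN b < u)).Nonempty :=
    ⟨b, Finset.mem_filter.mpr ⟨hbT, hlt⟩⟩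
  rw [nextN, dif_pos hne]
  apply le_antisymm
  · have hbne : b ∈ nd.T.filter (fun u => nd.prevN b < u) := Finset.mem_filter.mpr ⟨hbT, hlt⟩
    exact Finset.min'_le _ _ hbne
  · apply Finset.le_min'
    intro u hu
    have huT := (Finset.mem_filter.mp hu).1
    have hub := (Finset.mem_filter.mp hu).2
    by_contra hua
    push_neg at hua
    exact hno u huT ⟨hub, hua⟩

/-- The signed sum of outgoing slopes over all nodes of an edge vanishes. -/
lemma edge_deg_zero (nd : NodeData fF fG L) (hL : 0 < L) :
    ∑ s ∈ nd.T, ((if s < L then slopeR fF s else 0) + (if 0 < s then slopeL fF s else 0)) = 0 := by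
  classical
  rw [Finset.sum_add_distrib, Finset.sum_ite, Finset.sum_ite]
  simp only [Finset.sum_const_zero, add_zero]
  have key : ∑ s ∈ nd.T.filter (fun s => s < L), slopeR fF s =
      ∑ s ∈ nd.T.filter (fun s => 0 < s), (- slopeL fF s) := by
    refine Finset.sum_nbij' (i := nd.nextN) (j := nd.prevN) ?_ ?_ ?_ ?_ ?_
    · intro a ha
      obtain ⟨h1, h2, _, _⟩ := nd.nextN_spec (Finset.mem_filter.mp ha).1 (Finset.mem_filter.mp ha).2
      exact Finset.mem_filter.mpr ⟨h1, lt_of_le_of_lt (nd.bdd _ (Finset.mem_filter.mp ha).1).1 h2⟩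
    · intro b hb
      obtain ⟨h1, h2, _, _⟩ := nd.prevN_spec (Finset.mem_filter.mp hb).1 (Finset.mem_filter.mp hb).2
      exact Finset.mem_filter.mpr ⟨h1, lt_of_lt_of_le h2 (nd.bdd _ (Finset.mem_filter.mp hb).1).2⟩
    · intro a ha
      exact nd.prevN_nextN (Finset.mem_filter.mp ha).1 (Finset.mem_filter.mp ha).2
    · intro b hb
      exact nd.nextN_prevN (Finset.mem_filter.mp hb).1 (Finset.mem_filter.mp hb).2
    · intro a ha
      have haT := (Finset.mem_filter.mp ha).1
      have haL := (Finset.mem_filter.mp ha).2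
      obtain ⟨h1, h2, h3, h4⟩ := nd.nextN_spec haT haL
      obtain ⟨⟨m, hm⟩, _⟩ := nd.aff a (nd.nextN a) (nd.bdd _ haT).1 h2 h3 h4
      rw [hm.slopeR_left h2, hm.slopeL_right h2]
      simp
  rw [key]
  simp

end NodeData

/-- The principal divisor of a rational function is finitely supported of degree zero. -/
lemma ratDiv_finsupp_deg {Γ : MetricGraphModel} (f : RationalFunction Γ) :
    MetricGraphModel.DivFinSupp (MetricGraphModel.ratDiv f) ∧
      MetricGraphModel.divDegree (MetricGraphModel.ratDiv f) = 0 := by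
  classical
  set nds : ∀ e : Γ.E, NodeData (f.eFun e) (f.eFun e) (Γ.len e) :=
    fun e => mkNodeData (f.pl e) (f.pl e) with hnds
  set ptF : ∀ e : Γ.E, ℝ → Γ.Pt := fun e s =>
    if h : 0 < s ∧ s < Γ.len e then Sum.inr ⟨e, ⟨s, h⟩⟩ else Sum.inl (Γ.src e) with hptF
  set ebp : Γ.E → Finset Γ.Pt := fun e =>
    ((nds e).T.filter (fun s => 0 < s ∧ s < Γ.len e)).image (ptF e) with hebp
  set W : Finset Γ.Pt :=
    (Finset.univ.image (Sum.inl : Γ.V → Γ.Pt)) ∪ Finset.univ.biUnion ebp with hW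
  have hmemebp : ∀ e : Γ.E, ∀ p ∈ ebp e, ∃ s : ℝ, ∃ hs : 0 < s ∧ s < Γ.len e,
      s ∈ (nds e).T ∧ p = Sum.inr ⟨e, ⟨s, hs⟩⟩ := by
    intro e p hp
    obtain ⟨s, hsf, rfl⟩ := Finset.mem_image.mp hp
    obtain ⟨hsT, hsi⟩ := Finset.mem_filter.mp hsf
    exact ⟨s, hsi, hsT, by simp only [hptF, dif_pos hsi]⟩
  have hsupp : Function.support (MetricGraphModel.ratDiv f) ⊆ ↑W := by
    intro p hp
    rcases p with v | ⟨e, s, hs⟩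
    · exact Finset.mem_coe.mpr (Finset.mem_union_left _
        (Finset.mem_image.mpr ⟨v, Finset.mem_univ _, rfl⟩))
    · by_cases hsT : s ∈ (nds e).T
      · refine Finset.mem_coe.mpr (Finset.mem_union_right _ (Finset.mem_biUnion.mpr
          ⟨e, Finset.mem_univ _, ?_⟩))
        have hmf : s ∈ (nds e).T.filter (fun s => 0 < s ∧ s < Γ.len e) :=
          Finset.mem_filter.mpr ⟨hsT, hs⟩
        refine Finset.mem_image.mpr ⟨s, hmf, ?_⟩
        simp only [hptF, dif_pos hs]
      · exfalso
        obtain ⟨mF, _, hr, hl, _, _⟩ := (nds e).interior_slopes hs.1 hs.2 hsT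
        apply hp
        show slopeR (f.eFun e) s + slopeL (f.eFun e) s = 0
        rw [hr, hl]; ring
  constructor
  · exact W.finite_toSet.subset hsupp
  rw [MetricGraphModel.divDegree, finsum_eq_sum_of_support_subset _ hsupp, hW,
    Finset.sum_union ?disj]
  case disj =>
    rw [Finset.disjoint_left]
    rintro p hp1 hp2
    obtain ⟨v, _, rfl⟩ := Finset.mem_image.mp hp1
    obtain ⟨e, _, hmem⟩ := Finset.mem_biUnion.mp hp2
    obtain ⟨s, hs, _, habs⟩ := hmemebp e _ hmem
    exact Sum.inl_ne_inr habs
  have hvert : ∑ p ∈ Finset.univ.image (Sum.inl : Γ.V → Γ.Pt),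
      MetricGraphModel.ratDiv f p = ∑ e : Γ.E,
        (slopeR (f.eFun e) 0 + slopeL (f.eFun e) (Γ.len e)) := by
    rw [Finset.sum_image (fun a _ b _ h => Sum.inl_injective h)]
    show ∑ v : Γ.V, ∑ e : Γ.E,
      ((if Γ.src e = v then slopeR (f.eFun e) 0 else 0) +
       (if Γ.tgt e = v then slopeL (f.eFun e) (Γ.len e) else 0)) = _
    rw [Finset.sum_comm]
    refine Finset.sum_congr rfl (fun e _ => ?_)
    rw [Finset.sum_add_distrib, Finset.sum_ite_eq, Finset.sum_ite_eq]
    simp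
  have hedge : ∀ e : Γ.E, ∑ p ∈ ebp e, MetricGraphModel.ratDiv f p =
      ∑ s ∈ (nds e).T.filter (fun s => 0 < s ∧ s < Γ.len e),
        (slopeR (f.eFun e) s + slopeL (f.eFun e) s) := by
    intro e
    rw [hebp]
    rw [Finset.sum_image ?inj]
    case inj =>
      intro a ha b hb h
      have hA := (Finset.mem_filter.mp ha).2
      have hB := (Finset.mem_filter.mp hb).2
      simp only [hptF, dif_pos hA, dif_pos hB] at h
      exact congrArg (fun p : Γ.Pt => match p with
        | Sum.inl _ => (0:ℝ)
        | Sum.inr q => q.2.1) h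
    refine Finset.sum_congr rfl (fun s hsf => ?_)
    have hs := (Finset.mem_filter.mp hsf).2
    simp only [hptF, dif_pos hs]
    rfl
  rw [Finset.sum_biUnion ?pd]
  case pd =>
    intro e1 _ e2 _ hne
    rw [Function.onFun, Finset.disjoint_left]
    rintro p hp1 hp2
    obtain ⟨s1, hs1, _, rfl⟩ := hmemebp e1 _ hp1
    obtain ⟨s2, hs2, _, habs⟩ := hmemebp e2 _ hp2
    injection habs with habs
    exact hne (congrArg Sigma.fst habs)
  rw [hvert]
  rw [← Finset.sum_add_distrib]
  refine Finset.sum_eq_zero (fun e _ => ?_)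
  rw [hedge e]
  have hL0 : 0 < Γ.len e := Γ.len_pos e
  have htot := (nds e).edge_deg_zero hL0
  have hsplit : ∑ s ∈ (nds e).T,
      ((if s < Γ.len e then slopeR (f.eFun e) s else 0) +
       (if 0 < s then slopeL (f.eFun e) s else 0)) =
      (slopeR (f.eFun e) 0 + slopeL (f.eFun e) (Γ.len e)) +
      ∑ s ∈ (nds e).T.filter (fun s => 0 < s ∧ s < Γ.len e),
        (slopeR (f.eFun e) s + slopeL (f.eFun e) s) := by
    rw [← Finset.sum_filter_add_sum_filter_not ((nds e).T) (fun s => 0 < s ∧ s < Γ.len e)]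
    have hnotset : (nds e).T.filter (fun s => ¬(0 < s ∧ s < Γ.len e)) = {0, Γ.len e} := by
      apply Finset.ext
      intro s
      simp only [Finset.mem_filter, Finset.mem_insert, Finset.mem_singleton]
      constructor
      · rintro ⟨hsT, hnot⟩
        obtain ⟨h1, h2⟩ := (nds e).bdd s hsT
        rcases lt_or_eq_of_le h1 with h | h
        · right
          rcases lt_or_eq_of_le h2 with h' | h'
          · exact absurd ⟨h, h'⟩ hnot
          · exact h'
        · exact Or.inl h.symm
      · rintro (rfl | rfl)
        · exact ⟨(nds e).mem0, by intro h; exact lt_irrefl 0 h.1⟩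
        · exact ⟨(nds e).memL, by intro h; exact lt_irrefl _ h.2⟩
    rw [hnotset, Finset.sum_pair (by intro h; exact absurd h.symm (ne_of_gt hL0))]
    have e1 : ((if (0:ℝ) < Γ.len e then slopeR (f.eFun e) 0 else 0) +
        (if (0:ℝ) < 0 then slopeL (f.eFun e) 0 else 0)) = slopeR (f.eFun e) 0 := by
      rw [if_pos hL0, if_neg (lt_irrefl 0)]; ring
    have e2 : ((if Γ.len e < Γ.len e then slopeR (f.eFun e) (Γ.len e) else 0) +
        (if 0 < Γ.len e then slopeL (f.eFun e) (Γ.len e) else 0)) =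
        slopeL (f.eFun e) (Γ.len e) := by
      rw [if_neg (lt_irrefl _), if_pos hL0]; ring
    have e3 : ∀ s ∈ (nds e).T.filter (fun s => 0 < s ∧ s < Γ.len e),
        ((if s < Γ.len e then slopeR (f.eFun e) s else 0) +
         (if 0 < s then slopeL (f.eFun e) s else 0)) =
        (slopeR (f.eFun e) s + slopeL (f.eFun e) s) := by
      intro s hsf
      obtain ⟨_, h1, h2⟩ := Finset.mem_filter.mp hsf
      rw [if_pos h2, if_pos h1]
    rw [Finset.sum_congr rfl e3, e1, e2]
    ring
  rw [hsplit] at htot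
  linarith [htot]

end Degree
section Divisors
open MetricGraphModel

lemma unitDiv_support {Γ : MetricGraphModel} (p : Γ.Pt) :
    Function.support (unitDiv Γ p) ⊆ ({p} : Finset Γ.Pt) := by
  intro q hq
  simp only [Function.mem_support, unitDiv] at hq
  by_contra h
  simp only [Finset.coe_singleton, Set.mem_singleton_iff] at h
  rw [if_neg h] at hq
  exact hq rfl

lemma unitDiv_finsupp {Γ : MetricGraphModel} (p : Γ.Pt) : DivFinSupp (unitDiv Γ p) :=
  (Set.finite_singleton p).subset (by simpa using unitDiv_support p)

lemma unitDiv_deg {Γ : MetricGraphModel} (p : Γ.Pt) : divDegree (unitDiv Γ p) = 1 := by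
  rw [divDegree, finsum_eq_sum_of_support_subset _ (unitDiv_support p)]
  simp [unitDiv]

lemma sum_le_degree {Γ : MetricGraphModel} {D : Divisor Γ} (heff : DivEffective D)
    (hfin : DivFinSupp D) (W : Finset Γ.Pt) : ∑ p ∈ W, D p ≤ divDegree D := by
  classical
  have hsub : Function.support D ⊆ ↑(hfin.toFinset ∪ W) := by
    intro q hq
    exact Finset.mem_coe.mpr (Finset.mem_union_left _ (hfin.mem_toFinset.mpr hq))
  rw [divDegree, finsum_eq_sum_of_support_subset _ hsub]
  exact Finset.sum_le_sum_of_subset_of_nonneg Finset.subset_union_right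
    (fun p _ _ => heff p)

end Divisors

section Main
open MetricGraphModel

lemma main_lemma (Γ : MetricGraphModel)
    (h3ec : Γ.ThreeEdgeConnected)
    (hval : ∀ v : Γ.V, ∃ e : Γ.E, Γ.src e = v ∨ Γ.tgt e = v)
    (hVne : Nonempty Γ.V)
    (F G : RationalFunction Γ) (DX DY : Divisor Γ)
    (hXeff : DivEffective DX) (hYeff : DivEffective DY)
    (hXfin : DivFinSupp DX) (hXdeg : divDegree DX = 2)
    (x : Γ.V) (hx : 1 ≤ DX (Sum.inl x))
    (heq : ∀ p, DX p - DY p = ratDiv G p - ratDiv F p) :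
    ∃ c : ℝ, (∀ v : Γ.V, G.vVal v - F.vVal v = c) ∧
      (∀ e : Γ.E, ∀ s, 0 ≤ s → s ≤ Γ.len e → c ≤ G.eFun e s - F.eFun e s) := by
  classical
  obtain ⟨v⟩ := hVne
  have hEne : Nonempty Γ.E := by
    obtain ⟨e, _⟩ := hval v
    exact ⟨e⟩
  set nds : ∀ e : Γ.E, NodeData (F.eFun e) (G.eFun e) (Γ.len e) :=
    fun e => mkNodeData (F.pl e) (G.pl e) with hnds
  set g : Γ.E → ℝ → ℝ := fun e s => G.eFun e s - F.eFun e s with hg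
  set C : Finset ℝ := Finset.univ.biUnion (fun e => (nds e).T.image (g e)) with hC
  have hCne : C.Nonempty := by
    obtain ⟨e⟩ := hEne
    exact ⟨g e 0, Finset.mem_biUnion.mpr ⟨e, Finset.mem_univ _,
      Finset.mem_image.mpr ⟨0, (nds e).mem0, rfl⟩⟩⟩
  set c : ℝ := C.min' hCne with hc
  have hminT : ∀ e : Γ.E, ∀ s ∈ (nds e).T, c ≤ g e s := by
    intro e s hs
    exact C.min'_le _ (Finset.mem_biUnion.mpr ⟨e, Finset.mem_univ _,
      Finset.mem_image.mpr ⟨s, hs, rfl⟩⟩)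
  have hmin : ∀ e : Γ.E, ∀ s, 0 ≤ s → s ≤ Γ.len e → c ≤ g e s :=
    fun e => (nds e).min_bound (hminT e)
  set Hv : Γ.V → ℝ := fun v => G.vVal v - F.vVal v with hHv
  have hg0 : ∀ e : Γ.E, g e 0 = Hv (Γ.src e) := by
    intro e; simp only [hg, hHv, F.srcVal, G.srcVal]
  have hgL : ∀ e : Γ.E, g e (Γ.len e) = Hv (Γ.tgt e) := by
    intro e; simp only [hg, hHv, F.tgtVal, G.tgtVal]
  by_cases hall : ∀ w : Γ.V, Hv w = c
  · exact ⟨c, hall, hmin⟩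
  exfalso
  push_neg at hall
  obtain ⟨v₀, hv₀⟩ := hall
  -- slope differences
  set rsl : Γ.E → ℝ → ℤ := fun e a => slopeR (G.eFun e) a - slopeR (F.eFun e) a with hrsl
  set lsl : Γ.E → ℝ → ℤ := fun e a => slopeL (G.eFun e) a - slopeL (F.eFun e) a with hlsl
  -- divisor identity at interior points
  have hint : ∀ (e : Γ.E) (a : ℝ) (h : 0 < a ∧ a < Γ.len e),
      DX (Sum.inr ⟨e, ⟨a, h⟩⟩) = DY (Sum.inr ⟨e, ⟨a, h⟩⟩) + rsl e a + lsl e a := by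
    intro e a h
    have h1 := heq (Sum.inr ⟨e, ⟨a, h⟩⟩)
    have h2 : ratDiv G (Sum.inr ⟨e, ⟨a, h⟩⟩) =
        slopeR (G.eFun e) a + slopeL (G.eFun e) a := rfl
    have h3 : ratDiv F (Sum.inr ⟨e, ⟨a, h⟩⟩) =
        slopeR (F.eFun e) a + slopeL (F.eFun e) a := rfl
    rw [h2, h3] at h1
    simp only [hrsl, hlsl]
    linarith
  -- per-edge score at a point
  set eScore : Γ.E → Γ.Pt → ℤ := fun e p =>
    Sum.elim
      (fun w => (if Γ.src e = w then rsl e 0 else 0) +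
                (if Γ.tgt e = w then lsl e (Γ.len e) else 0))
      (fun q => if q.1 = e then rsl e q.2.1 + lsl e q.2.1 else 0) p with heS
  set pMin : Γ.Pt → Prop := fun p =>
    Sum.elim (fun w => Hv w = c) (fun q => g q.1 q.2.1 = c) p with hpM
  have hES1 : ∀ p : Γ.Pt, DX p - DY p = ∑ e : Γ.E, eScore e p := by
    intro p
    rcases p with w | ⟨e', a, ha⟩
    · have h1 := heq (Sum.inl w)
      have h2 : ratDiv G (Sum.inl w) = ∑ e : Γ.E,
          ((if Γ.src e = w then slopeR (G.eFun e) 0 else 0) +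
           (if Γ.tgt e = w then slopeL (G.eFun e) (Γ.len e) else 0)) := rfl
      have h3 : ratDiv F (Sum.inl w) = ∑ e : Γ.E,
          ((if Γ.src e = w then slopeR (F.eFun e) 0 else 0) +
           (if Γ.tgt e = w then slopeL (F.eFun e) (Γ.len e) else 0)) := rfl
      rw [h1, h2, h3, ← Finset.sum_sub_distrib]
      refine Finset.sum_congr rfl fun e _ => ?_
      simp only [heS, Sum.elim_inl, hrsl, hlsl]
      by_cases h1 : Γ.src e = w <;> by_cases h2 : Γ.tgt e = w <;> simp [h1, h2] <;> ring
    · rw [hint e' a ha]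
      have : ∑ e : Γ.E, eScore e (Sum.inr ⟨e', a, ha⟩) =
          rsl e' a + lsl e' a := by
        simp only [heS, Sum.elim_inr]
        rw [Finset.sum_ite_eq]
        simp
      rw [this]
      ring
  have hES2 : ∀ p : Γ.Pt, pMin p → ∀ e : Γ.E, 0 ≤ eScore e p := by
    intro p hp e
    rcases p with w | ⟨e', a, ha⟩
    · simp only [hpM, Sum.elim_inl] at hp
      simp only [heS, Sum.elim_inl]
      have t1 : 0 ≤ (if Γ.src e = w then rsl e 0 else 0) := by
        by_cases h : Γ.src e = w
        · rw [if_pos h, hrsl]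
          exact (nds e).slopeDiff_nonneg_right (hmin e) (le_refl 0) (Γ.len_pos e)
            (by show g e 0 = c; rw [hg0 e, h]; exact hp)
        · rw [if_neg h]
      have t2 : 0 ≤ (if Γ.tgt e = w then lsl e (Γ.len e) else 0) := by
        by_cases h : Γ.tgt e = w
        · rw [if_pos h, hlsl]
          exact (nds e).slopeDiff_nonneg_left (hmin e) (Γ.len_pos e) (le_refl _)
            (by show g e (Γ.len e) = c; rw [hgL e, h]; exact hp)
        · rw [if_neg h]
      exact add_nonneg t1 t2
    · simp only [hpM, Sum.elim_inr] at hp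
      simp only [heS, Sum.elim_inr]
      by_cases h : e' = e
      · subst h
        rw [if_pos rfl]
        have t1 : 0 ≤ rsl e' a := by
          rw [hrsl]
          exact (nds e').slopeDiff_nonneg_right (hmin e') (le_of_lt ha.1) ha.2 hp
        have t2 : 0 ≤ lsl e' a := by
          rw [hlsl]
          exact (nds e').slopeDiff_nonneg_left (hmin e') ha.1 (le_of_lt ha.2) hp
        linarith
      · rw [if_neg h]
  -- the cut set
  set S : Finset Γ.E := Finset.univ.filter (fun e => ∃ a : ℝ, g e a = c ∧
    ((0 ≤ a ∧ a < Γ.len e ∧ 1 ≤ rsl e a) ∨ (0 < a ∧ a ≤ Γ.len e ∧ 1 ≤ lsl e a))) with hS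
  have hES3 : ∀ e ∈ S, ∃ p : Γ.Pt, pMin p ∧ 1 ≤ eScore e p := by
    intro e he
    obtain ⟨a, hgc, hcase⟩ := (Finset.mem_filter.mp he).2
    rcases hcase with ⟨ha0, haL, hslope⟩ | ⟨ha0, haL, hslope⟩
    · rcases eq_or_lt_of_le ha0 with h0 | h0
      · -- a = 0 : exit at the source vertex
        refine ⟨Sum.inl (Γ.src e), ?_, ?_⟩
        · simp only [hpM, Sum.elim_inl]
          rw [← hg0 e, h0]; exact hgc
        · simp only [heS, Sum.elim_inl, eq_self_iff_true, if_true]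
          have t2 : 0 ≤ (if Γ.tgt e = Γ.src e then lsl e (Γ.len e) else 0) := by
            by_cases h : Γ.tgt e = Γ.src e
            · rw [if_pos h, hlsl]
              refine (nds e).slopeDiff_nonneg_left (hmin e) (Γ.len_pos e) (le_refl _) ?_
              show g e (Γ.len e) = c
              rw [hgL e, h, ← hg0 e, h0]; exact hgc
            · rw [if_neg h]
          have : 1 ≤ rsl e 0 := by rw [← h0] at hslope; exact hslope
          linarith
      · -- interior exit point
        refine ⟨Sum.inr ⟨e, ⟨a, ⟨h0, haL⟩⟩⟩, ?_, ?_⟩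
        · simpa only [hpM, Sum.elim_inr] using hgc
        · simp only [heS, Sum.elim_inr, eq_self_iff_true, if_true]
          have t2 : 0 ≤ lsl e a := by
            rw [hlsl]
            exact (nds e).slopeDiff_nonneg_left (hmin e) h0 (le_of_lt haL) hgc
          linarith
    · rcases eq_or_lt_of_le haL with hL | hL
      · -- a = L : exit at the target vertex
        refine ⟨Sum.inl (Γ.tgt e), ?_, ?_⟩
        · simp only [hpM, Sum.elim_inl]
          rw [← hgL e, ← hL]; exact hgc
        · simp only [heS, Sum.elim_inl, eq_self_iff_true, if_true]
          have t1 : 0 ≤ (if Γ.src e = Γ.tgt e then rsl e 0 else 0) := by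
            by_cases h : Γ.src e = Γ.tgt e
            · rw [if_pos h, hrsl]
              refine (nds e).slopeDiff_nonneg_right (hmin e) (le_refl 0) (Γ.len_pos e) ?_
              show g e 0 = c
              rw [hg0 e, h, ← hgL e, ← hL]; exact hgc
            · rw [if_neg h]
          have t2 : 1 ≤ lsl e (Γ.len e) := by
            rw [hL] at hslope; exact hslope
          linarith
      · refine ⟨Sum.inr ⟨e, ⟨a, ⟨ha0, hL⟩⟩⟩, ?_, ?_⟩
        · simpa only [hpM, Sum.elim_inr] using hgc
        · simp only [heS, Sum.elim_inr, eq_self_iff_true, if_true]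
          have t1 : 0 ≤ rsl e a := by
            rw [hrsl]
            exact (nds e).slopeDiff_nonneg_right (hmin e) (le_of_lt ha0) hL hgc
          linarith
  -- the cut set has at most two edges
  have hDXlow : ∀ p : Γ.Pt, pMin p → ∀ P : Finset Γ.E,
      (∀ e ∈ P, 1 ≤ eScore e p) → (P.card : ℤ) ≤ DX p := by
    intro p hp P hPs
    have h1 : (P.card : ℤ) = ∑ e ∈ P, (1 : ℤ) := by simp
    have h2 : ∑ e ∈ P, (1 : ℤ) ≤ ∑ e ∈ P, eScore e p := Finset.sum_le_sum hPs
    have h3 : ∑ e ∈ P, eScore e p ≤ ∑ e : Γ.E, eScore e p :=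
      Finset.sum_le_sum_of_subset_of_nonneg (Finset.subset_univ P)
        (fun e _ _ => hES2 p hp e)
    have h4 := hES1 p
    have h5 := hYeff p
    linarith
  have hcard : S.card ≤ 2 := by
    have hch : ∀ e, e ∈ S → ∃ p : Γ.Pt, pMin p ∧ 1 ≤ eScore e p := hES3
    choose pf hpf1 hpf2 using hch
    set pfun : Γ.E → Γ.Pt := fun e => if h : e ∈ S then pf e h else Sum.inl x with hpfun
    set W : Finset Γ.Pt := S.image pfun with hW
    have hfib : S.card = ∑ p ∈ W, (S.filter (fun e => pfun e = p)).card :=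
      Finset.card_eq_sum_card_fiberwise (fun e he => Finset.mem_image_of_mem _ he)
    have hbound : ∀ p ∈ W, ((S.filter (fun e => pfun e = p)).card : ℤ) ≤ DX p := by
      intro p hpW
      obtain ⟨e₀, he₀, hpe₀⟩ := Finset.mem_image.mp hpW
      have hp : pMin p := by
        rw [← hpe₀]
        show pMin (if h : e₀ ∈ S then pf e₀ h else Sum.inl x)
        rw [dif_pos he₀]
        exact hpf1 e₀ he₀
      refine hDXlow p hp _ (fun e he => ?_)
      obtain ⟨heS', hpe⟩ := Finset.mem_filter.mp he
      rw [← hpe]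
      show 1 ≤ eScore e (if h : e ∈ S then pf e h else Sum.inl x)
      rw [dif_pos heS']
      exact hpf2 e heS'
    have hsum : ∑ p ∈ W, DX p ≤ divDegree DX := sum_le_degree hXeff hXfin W
    have : (S.card : ℤ) ≤ 2 := by
      rw [hfib]
      push_cast
      calc ∑ p ∈ W, ((S.filter (fun e => pfun e = p)).card : ℤ)
          ≤ ∑ p ∈ W, DX p := Finset.sum_le_sum hbound
        _ ≤ divDegree DX := hsum
        _ = 2 := hXdeg
    exact_mod_cast this
  -- propagation of minimality along edges avoiding S
  have hprop1 : ∀ e : Γ.E, e ∉ S → Hv (Γ.src e) = c → Hv (Γ.tgt e) = c := by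
    intro e he hsrc
    by_contra htgt
    obtain ⟨a, h0, hL, hgc, hsl⟩ := (nds e).exit_right (hmin e)
      (by show g e 0 = c; rw [hg0 e]; exact hsrc)
      (by show g e (Γ.len e) ≠ c; rw [hgL e]; exact htgt)
    exact he (Finset.mem_filter.mpr ⟨Finset.mem_univ _,
      ⟨a, hgc, Or.inl ⟨h0, hL, by rw [hrsl]; exact hsl⟩⟩⟩)
  have hprop2 : ∀ e : Γ.E, e ∉ S → Hv (Γ.tgt e) = c → Hv (Γ.src e) = c := by
    intro e he htgt
    by_contra hsrc
    obtain ⟨a, h0, hL, hgc, hsl⟩ := (nds e).exit_left (hmin e)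
      (by show g e (Γ.len e) = c; rw [hgL e]; exact htgt)
      (by show g e 0 ≠ c; rw [hg0 e]; exact hsrc) (Γ.len_pos e)
    exact he (Finset.mem_filter.mpr ⟨Finset.mem_univ _,
      ⟨a, hgc, Or.inr ⟨h0, hL, by rw [hlsl]; exact hsl⟩⟩⟩)
  have hwalk : ∀ (l : List (Γ.E × Bool)) (u w : Γ.V), IsWalk Γ l u w →
      (∀ z ∈ l, z.1 ∉ S) → Hv u = c → Hv w = c := by
    intro l
    induction l with
    | nil =>
      intro u w h _ hu
      have : u = w := h
      rwa [← this]
    | cons hd tl ih =>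
      rintro u w ⟨hsrc, hwk⟩ havoid hu
      have hdS : hd.1 ∉ S := havoid hd (List.mem_cons_self)
      have hnext : Hv (Γ.dTgt hd) = c := by
        rcases hd with ⟨e, b⟩
        cases b
        · have h1 : Γ.dSrc (e, false) = Γ.tgt e := rfl
          have h2 : Γ.dTgt (e, false) = Γ.src e := rfl
          rw [h2]
          exact hprop2 e hdS (by rw [← h1, hsrc]; exact hu)
        · have h1 : Γ.dSrc (e, true) = Γ.src e := rfl
          have h2 : Γ.dTgt (e, true) = Γ.tgt e := rfl
          rw [h2]
          exact hprop1 e hdS (by rw [← h1, hsrc]; exact hu)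
      exact ih _ _ hwk (fun z hz => havoid z (List.mem_cons_of_mem _ hz)) hnext
  by_cases hvx : ∃ v₁ : Γ.V, Hv v₁ = c
  · obtain ⟨v₁, hv₁⟩ := hvx
    obtain ⟨l, hwk, havoid⟩ := h3ec S hcard v₁ v₀
    exact hv₀ (hwalk l v₁ v₀ hwk (fun z hz => havoid z hz) hv₁)
  · -- no vertex attains the minimum: the minimum is attained strictly inside an edge
    push_neg at hvx
    have hcC : c ∈ C := C.min'_mem hCne
    obtain ⟨e, _, hmem⟩ := Finset.mem_biUnion.mp hcC
    obtain ⟨s₀, hs₀T, hs₀⟩ := Finset.mem_image.mp hmem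
    obtain ⟨hs₀0, hs₀L⟩ := (nds e).bdd s₀ hs₀T
    have hc0 : g e 0 ≠ c := by rw [hg0 e]; exact hvx _
    have hcL : g e (Γ.len e) ≠ c := by rw [hgL e]; exact hvx _
    obtain ⟨a, b, ha0, hab, hbL, hgca, hgcb, hsla, hslb⟩ :=
      (nds e).exit_interior (hmin e) hc0 hcL hs₀0 hs₀L hs₀
    have haL : a < Γ.len e := lt_of_le_of_lt hab hbL
    have hb0 : 0 < b := lt_of_lt_of_le ha0 hab
    set pa : Γ.Pt := Sum.inr ⟨e, ⟨a, ⟨ha0, haL⟩⟩⟩ with hpa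
    set pb : Γ.Pt := Sum.inr ⟨e, ⟨b, ⟨hb0, hbL⟩⟩⟩ with hpb
    have hDXa : 1 ≤ DX pa := by
      have h1 := hint e a ⟨ha0, haL⟩
      have h2 : 0 ≤ rsl e a := by
        rw [hrsl]
        exact (nds e).slopeDiff_nonneg_right (hmin e) (le_of_lt ha0) haL hgca
      have h3 : 1 ≤ lsl e a := by rw [hlsl]; exact hsla
      have h4 := hYeff pa
      rw [hpa]
      rw [hpa] at h4
      linarith
    have hDXb : 1 ≤ DX pb := by
      have h1 := hint e b ⟨hb0, hbL⟩
      have h2 : 1 ≤ rsl e b := by rw [hrsl]; exact hslb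
      have h3 : 0 ≤ lsl e b := by
        rw [hlsl]
        exact (nds e).slopeDiff_nonneg_left (hmin e) hb0 (le_of_lt hbL) hgcb
      have h4 := hYeff pb
      rw [hpb]
      rw [hpb] at h4
      linarith
    have hxa : (Sum.inl x : Γ.Pt) ≠ pa := by rw [hpa]; exact fun h => Sum.inl_ne_inr h
    have hxb : (Sum.inl x : Γ.Pt) ≠ pb := by rw [hpb]; exact fun h => Sum.inl_ne_inr h
    rcases eq_or_lt_of_le hab with heqab | hltab
    · -- a = b : a single interior point with two exits
      subst heqab
      have hDXa2 : 2 ≤ DX pa := by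
        have h1 := hint e a ⟨ha0, haL⟩
        have h2 : 1 ≤ rsl e a := by rw [hrsl]; exact hslb
        have h3 : 1 ≤ lsl e a := by rw [hlsl]; exact hsla
        have h4 := hYeff pa
        rw [hpa]
        rw [hpa] at h4
        linarith
      have hsum : ∑ p ∈ ({Sum.inl x, pa} : Finset Γ.Pt), DX p ≤ divDegree DX :=
        sum_le_degree hXeff hXfin _
      rw [Finset.sum_pair hxa, hXdeg] at hsum
      linarith
    · have hpapb : pa ≠ pb := by
        intro h
        have := congrArg (fun p : Γ.Pt => match p with
          | Sum.inl _ => (0:ℝ)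
          | Sum.inr q => q.2.1) h
        simp only [hpa, hpb] at this
        exact absurd this (ne_of_lt hltab)
      have hsum : ∑ p ∈ ({Sum.inl x, pa, pb} : Finset Γ.Pt), DX p ≤ divDegree DX :=
        sum_le_degree hXeff hXfin _
      rw [Finset.sum_insert (by
        simp only [Finset.mem_insert, Finset.mem_singleton]
        rintro (h | h)
        exacts [hxa h, hxb h]), Finset.sum_pair hpapb, hXdeg] at hsum
      linarith

end Main
section Final
open MetricGraphModel

lemma const_case (Γ : MetricGraphModel) (hVne : Nonempty Γ.V)
    (F G : RationalFunction Γ) (c c' : ℝ)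
    (h1 : ∀ v : Γ.V, G.vVal v - F.vVal v = c)
    (hlow : ∀ e : Γ.E, ∀ s, 0 ≤ s → s ≤ Γ.len e → c ≤ G.eFun e s - F.eFun e s)
    (h2 : ∀ v : Γ.V, F.vVal v - G.vVal v = c')
    (hlow' : ∀ e : Γ.E, ∀ s, 0 ≤ s → s ≤ Γ.len e → c' ≤ F.eFun e s - G.eFun e s) :
    ∀ p : Γ.Pt, ratDiv G p = ratDiv F p := by
  obtain ⟨v⟩ := hVne
  have hcc : c' = -c := by have e1 := h1 v; have e2 := h2 v; linarith
  have hall : ∀ e : Γ.E, ∀ s, 0 ≤ s → s ≤ Γ.len e → G.eFun e s - F.eFun e s = c := by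
    intro e s hs1 hs2
    have e1 := hlow e s hs1 hs2
    have e2 := hlow' e s hs1 hs2
    rw [hcc] at e2
    linarith
  have key : ∀ e : Γ.E,
      (slopeR (G.eFun e) 0 = slopeR (F.eFun e) 0) ∧
      (slopeL (G.eFun e) (Γ.len e) = slopeL (F.eFun e) (Γ.len e)) ∧
      ∀ a, 0 < a → a < Γ.len e →
        slopeR (G.eFun e) a = slopeR (F.eFun e) a ∧
        slopeL (G.eFun e) a = slopeL (F.eFun e) a := by
    intro e
    obtain ⟨hR, hLs⟩ := (mkNodeData (F.pl e) (G.pl e)).const_slopes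
      (fun s hs1 hs2 => hall e s hs1 hs2)
    refine ⟨?_, ?_, fun a ha1 ha2 => ⟨?_, ?_⟩⟩
    · have := hR 0 (le_refl 0) (Γ.len_pos e); omega
    · have := hLs (Γ.len e) (Γ.len_pos e) (le_refl _); omega
    · have := hR a (le_of_lt ha1) ha2; omega
    · have := hLs a ha1 (le_of_lt ha2); omega
  intro p
  rcases p with w | ⟨e, a, ha⟩
  · show (∑ e : Γ.E, ((if Γ.src e = w then slopeR (G.eFun e) 0 else 0) +
      (if Γ.tgt e = w then slopeL (G.eFun e) (Γ.len e) else 0))) = _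
    refine Finset.sum_congr rfl (fun e _ => ?_)
    obtain ⟨k1, k2, _⟩ := key e
    by_cases hs : Γ.src e = w <;> by_cases ht : Γ.tgt e = w <;>
      simp [hs, ht, k1, k2]
  · show slopeR (G.eFun e) a + slopeL (G.eFun e) a = _
    obtain ⟨k1, k2⟩ := (key e).2.2 a ha.1 ha.2
    rw [k1, k2]
    rfl

end Final
/-- A `3`-edge connected metric graph whose canonical model
has at least `3` vertices is not divisorially hyperelliptic: no divisor of
degree `2` has rank at least `1`. -/
theorem threeEdgeConnected_not_hyperelliptic
    (Γ : MetricGraphModel) (hcan : Γ.IsCanonical) (hcard : 3 ≤ Fintype.card Γ.V)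
    (h3ec : Γ.ThreeEdgeConnected) :
    ¬ ∃ D : MetricGraphModel.Divisor Γ,
        MetricGraphModel.DivFinSupp D ∧ MetricGraphModel.divDegree D = 2 ∧
        MetricGraphModel.RankGE Γ D 1 := by
  classical
  rintro ⟨D, hDfin, hDdeg, hrk⟩
  obtain ⟨hconn, hval3⟩ := hcan
  have hVne : Nonempty Γ.V := hconn.1
  have hval : ∀ v : Γ.V, ∃ e : Γ.E, Γ.src e = v ∨ Γ.tgt e = v := by
    intro v
    by_contra h
    push_neg at h
    have hz : Γ.valence v = 0 := by
      rw [MetricGraphModel.valence]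
      refine Finset.sum_eq_zero (fun e _ => ?_)
      obtain ⟨h1, h2⟩ := h e
      rw [MetricGraphModel.incid, if_neg h1, if_neg h2]
      omega
    have := hval3 v
    omega
  -- three distinct vertices
  have hcard' : 3 ≤ (Finset.univ : Finset Γ.V).card := by
    rw [Finset.card_univ]; exact hcard
  obtain ⟨P, _, hP3⟩ := Finset.exists_subset_card_eq hcard'
  obtain ⟨x, y, z, hxy, hxz, hyz, rfl⟩ := Finset.card_eq_three.mp hP3
  -- representatives of the divisor class through each vertex
  have hrep : ∀ v : Γ.V, ∃ (Dv : MetricGraphModel.Divisor Γ)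
      (f : MetricGraphModel.RationalFunction Γ),
      MetricGraphModel.DivEffective Dv ∧ MetricGraphModel.DivFinSupp Dv ∧
      MetricGraphModel.divDegree Dv = 2 ∧ 1 ≤ Dv (Sum.inl v) ∧
      ∀ p, Dv p = D p - MetricGraphModel.ratDiv f p := by
    intro v
    have hueff : MetricGraphModel.DivEffective (MetricGraphModel.unitDiv Γ (Sum.inl v)) := by
      intro p
      by_cases h : p = Sum.inl v <;> simp [MetricGraphModel.unitDiv, h]
    obtain ⟨B, hBeff, hBfin, f, hfeq⟩ := hrk (MetricGraphModel.unitDiv Γ (Sum.inl v))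
      hueff (unitDiv_finsupp _) (by rw [unitDiv_deg]; norm_num)
    obtain ⟨hfdfin, hfdeg⟩ := ratDiv_finsupp_deg f
    have hBeq : B = fun p => (fun q => D q - MetricGraphModel.unitDiv Γ (Sum.inl v) q) p -
        MetricGraphModel.ratDiv f p := by
      funext p
      have h' : D p - MetricGraphModel.unitDiv Γ (Sum.inl v) p =
          B p + MetricGraphModel.ratDiv f p := hfeq p
      dsimp only
      linarith
    have hfin_sub : (Function.support
        (fun q => D q - MetricGraphModel.unitDiv Γ (Sum.inl v) q)).Finite := by
      refine (hDfin.union (unitDiv_finsupp (Sum.inl v))).subset (fun p hp => ?_)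
      rw [Function.mem_support] at hp
      rw [Set.mem_union, Function.mem_support, Function.mem_support]
      by_contra hcon
      push_neg at hcon
      apply hp
      rw [hcon.1, hcon.2]
      ring
    have hBdeg : MetricGraphModel.divDegree B = 1 := by
      rw [MetricGraphModel.divDegree, hBeq, finsum_sub_distrib hfin_sub hfdfin,
        finsum_sub_distrib hDfin (unitDiv_finsupp (Sum.inl v))]
      have e1 : ∑ᶠ p, D p = 2 := hDdeg
      have e2 : ∑ᶠ p, MetricGraphModel.unitDiv Γ (Sum.inl v) p = 1 := unitDiv_deg _
      have e3 : ∑ᶠ p, MetricGraphModel.ratDiv f p = 0 := hfdeg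
      rw [e1, e2, e3]
      ring
    refine ⟨fun p => MetricGraphModel.unitDiv Γ (Sum.inl v) p + B p, f, ?_, ?_, ?_, ?_, ?_⟩
    · intro p
      exact add_nonneg (hueff p) (hBeff p)
    · refine ((unitDiv_finsupp (Sum.inl v)).union hBfin).subset (fun p hp => ?_)
      rw [Function.mem_support] at hp
      rw [Set.mem_union, Function.mem_support, Function.mem_support]
      by_contra hcon
      push_neg at hcon
      apply hp
      rw [hcon.1, hcon.2]
      ring
    · rw [MetricGraphModel.divDegree,
        finsum_add_distrib (unitDiv_finsupp (Sum.inl v)) hBfin]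
      have e2 : ∑ᶠ p, MetricGraphModel.unitDiv Γ (Sum.inl v) p = 1 := unitDiv_deg _
      have e4 : ∑ᶠ p, B p = 1 := hBdeg
      rw [e2, e4]
      norm_num
    · have h1 : MetricGraphModel.unitDiv Γ (Sum.inl v) (Sum.inl v) = 1 := by
        simp [MetricGraphModel.unitDiv]
      have h2 := hBeff (Sum.inl v)
      dsimp only
      rw [h1]
      linarith
    · intro p
      have h' : D p - MetricGraphModel.unitDiv Γ (Sum.inl v) p =
          B p + MetricGraphModel.ratDiv f p := hfeq p
      dsimp only
      linarith
  obtain ⟨Dx, fx, hXe, hXf, hXd, hXv, hXk⟩ := hrep x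
  obtain ⟨Dy, fy, hYe, hYf, hYd, hYv, hYk⟩ := hrep y
  obtain ⟨Dz, fz, hZe, hZf, hZd, hZv, hZk⟩ := hrep z
  have hpair : ∀ (u w : Γ.V) (Du Dw : MetricGraphModel.Divisor Γ)
      (fu fw : MetricGraphModel.RationalFunction Γ),
      MetricGraphModel.DivEffective Du → MetricGraphModel.DivFinSupp Du →
      MetricGraphModel.divDegree Du = 2 → 1 ≤ Du (Sum.inl u) →
      (∀ p, Du p = D p - MetricGraphModel.ratDiv fu p) →
      MetricGraphModel.DivEffective Dw → MetricGraphModel.DivFinSupp Dw →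
      MetricGraphModel.divDegree Dw = 2 → 1 ≤ Dw (Sum.inl w) →
      (∀ p, Dw p = D p - MetricGraphModel.ratDiv fw p) →
      ∀ p, Du p = Dw p := by
    intro u w Du Dw fu fw hue huf hud huv huk hwe hwf hwd hwv hwk
    have heq1 : ∀ p, Du p - Dw p =
        MetricGraphModel.ratDiv fw p - MetricGraphModel.ratDiv fu p := by
      intro p
      have h1 := huk p
      have h2 := hwk p
      linarith
    obtain ⟨c, hc1, hc2⟩ := main_lemma Γ h3ec hval hVne fu fw Du Dw hue hwe huf hud u huv heq1
    have heq2 : ∀ p, Dw p - Du p =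
        MetricGraphModel.ratDiv fu p - MetricGraphModel.ratDiv fw p := by
      intro p
      have := heq1 p
      linarith
    obtain ⟨c', hc1', hc2'⟩ := main_lemma Γ h3ec hval hVne fw fu Dw Du hwe hue hwf hwd w hwv heq2
    have hcon := const_case Γ hVne fu fw c c' hc1 hc2 hc1' hc2'
    intro p
    have h1 := huk p
    have h2 := hwk p
    have h3 := hcon p
    linarith
  have hxy' := hpair x y Dx Dy fx fy hXe hXf hXd hXv hXk hYe hYf hYd hYv hYk
  have hxz' := hpair x z Dx Dz fx fz hXe hXf hXd hXv hXk hZe hZf hZd hZv hZk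
  -- Dx has value ≥ 1 at the three distinct vertex points, contradicting degree 2
  have hv1 : 1 ≤ Dx (Sum.inl x) := hXv
  have hv2 : 1 ≤ Dx (Sum.inl y) := by rw [hxy' (Sum.inl y)]; exact hYv
  have hv3 : 1 ≤ Dx (Sum.inl z) := by rw [hxz' (Sum.inl z)]; exact hZv
  have hne1 : (Sum.inl x : Γ.Pt) ≠ Sum.inl y := fun h => hxy (Sum.inl_injective h)
  have hne2 : (Sum.inl x : Γ.Pt) ≠ Sum.inl z := fun h => hxz (Sum.inl_injective h)
  have hne3 : (Sum.inl y : Γ.Pt) ≠ Sum.inl z := fun h => hyz (Sum.inl_injective h)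
  have hsum : ∑ p ∈ ({Sum.inl x, Sum.inl y, Sum.inl z} : Finset Γ.Pt), Dx p ≤
      MetricGraphModel.divDegree Dx := sum_le_degree hXe hXf _
  rw [Finset.sum_insert (by
    simp only [Finset.mem_insert, Finset.mem_singleton]
    rintro (h | h)
    exacts [hne1 h, hne2 h]), Finset.sum_pair hne3, hXd] at hsum
  linarith
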